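/- arXiv:2512.10064 — 6 statements merged into one kernel-verified Lean document; each statement's English description precedes it below -/
import Mathlib

section
/- Let X be a connected, locally path-connected topological space with basepoint x₀. Let p : E → X be a covering map with E simply connected and locally path-connected and e₀ ∈ E with p(e₀) = x₀, and let q : F → X be any covering map with f₀ ∈ F satisfying q(f₀) = x₀. Then there exists a unique continuous map g : E → F such that q ∘ g = p and g(e₀) = f₀. -/
universe u

open Set Topology unitInterval

section lifting

variable {X F : Type*} [TopologicalSpace X] [TopologicalSpace F] {q : F → X}

/-- Extend a lift defined on `[0, x]` across an evenly covered stretch `[x, z]`. -/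
lemma ext_step {γ : ℝ → X} (hγ : Continuous γ)
    {Γ : ℝ → F} (hΓ : Continuous Γ) {x z : ℝ} (h0x : 0 ≤ x) (hxz : x ≤ z)
    (hlift : ∀ s ∈ Icc (0:ℝ) x, q (Γ s) = γ s)
    {It : Type*} [TopologicalSpace It] (T : Bundle.Trivialization It q)
    (hbase : ∀ s ∈ Icc x z, γ s ∈ T.baseSet) :
    ∃ Γ' : ℝ → F, Continuous Γ' ∧ Γ' 0 = Γ 0 ∧ ∀ s ∈ Icc (0:ℝ) z, q (Γ' s) = γ s := by
  have hqx : q (Γ x) = γ x := hlift x ⟨h0x, le_refl x⟩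
  have hxbase : q (Γ x) ∈ T.baseSet := by rw [hqx]; exact hbase x ⟨le_refl x, hxz⟩
  have hsrc : Γ x ∈ T.source := T.mem_source.mpr hxbase
  set c : It := (T (Γ x)).2 with hc
  set cl : ℝ → ℝ := fun s => max x (min s z) with hcl
  have hclmem : ∀ s, cl s ∈ Icc x z := fun s => ⟨le_max_left _ _, max_le hxz (min_le_right _ _)⟩
  refine ⟨fun s => if s ≤ x then Γ s else T.toOpenPartialHomeomorph.symm (γ (cl s), c), ?_, ?_, ?_⟩
  · refine Continuous.if_le hΓ ?_ continuous_id continuous_const ?_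
    · refine T.toOpenPartialHomeomorph.continuousOn_symm.comp_continuous
        ((hγ.comp (continuous_const.max (continuous_id.min continuous_const))).prodMk
          continuous_const) (fun s => ?_)
      exact T.mem_target.mpr (hbase _ (hclmem s))
    · intro s hs
      subst hs
      have : cl s = s := by
        simp only [hcl]
        rw [min_eq_left hxz, max_self]
      rw [this, ← hqx, hc]
      have := T.mk_proj_snd' hxbase
      rw [this]
      exact (T.toOpenPartialHomeomorph.left_inv hsrc).symm
  · simp [not_lt.mpr h0x, h0x]
  · intro s hs
    by_cases h : s ≤ x
    · simp only [if_pos h]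
      exact hlift s ⟨hs.1, h⟩
    · simp only [if_neg h]
      push_neg at h
      have hcls : cl s = s := by
        simp only [hcl]
        rw [min_eq_left hs.2, max_eq_right h.le]
      rw [hcls]
      exact T.proj_symm_apply' (hbase s ⟨h.le, hs.2⟩)

lemma cov_range_isClopen (hq : IsCoveringMap q) : IsClopen (range q) := by
  refine ⟨?_, hq.isOpenMap.isOpen_range⟩
  rw [← isOpen_compl_iff, isOpen_iff_forall_mem_open]
  intro x hx
  obtain ⟨_, U, hxU, hU, _, H, _⟩ := hq x
  refine ⟨U, fun y hy ⟨e, he⟩ => hx ?_, hU, hxU⟩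
  have hmem : e ∈ q ⁻¹' U := by rw [mem_preimage, he]; exact hy
  exact ⟨(H ⟨e, hmem⟩).2.1, (H ⟨e, hmem⟩).2.2⟩

lemma mem_range_of_connected {Y : Type*} [TopologicalSpace Y] [PreconnectedSpace Y]
    (hq : IsCoveringMap q) {γ : Y → X} (hγ : Continuous γ) (y₀ y : Y)
    (h : γ y₀ ∈ range q) : γ y ∈ range q := by
  have hc : IsClopen (γ ⁻¹' range q) := (cov_range_isClopen hq).preimage hγ
  rw [← mem_preimage, hc.eq_univ ⟨y₀, h⟩]
  exact mem_univ y

lemma cov_triv (hq : IsCoveringMap q) (x : X) (hx : x ∈ range q) :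
    DiscreteTopology (q ⁻¹' {x}) ∧ ∃ T : Bundle.Trivialization (q ⁻¹' {x}) q, x ∈ T.baseSet := by
  obtain ⟨e, rfl⟩ := hx
  haveI : Nonempty (q ⁻¹' {q e}) := ⟨⟨e, rfl⟩⟩
  exact ⟨(hq (q e)).1, (hq (q e)).toTrivialization, (hq (q e)).mem_toTrivialization_baseSet⟩

/-- Lifts exist for clamped curves `ℝ → X`. -/
lemma lift_exists (hq : IsCoveringMap q) {γ : ℝ → X} (hγ : Continuous γ)
    (hcl : ∀ t, γ t = γ ((projIcc (0:ℝ) 1 zero_le_one t : I) : ℝ))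
    (f : F) (hf : q f = γ 0) :
    ∃ Γ : ℝ → F, Continuous Γ ∧ Γ 0 = f ∧ ∀ t, q (Γ t) = γ t := by
  set S : Set ℝ := {t | ∃ Γ : ℝ → F, Continuous Γ ∧ Γ 0 = f ∧ ∀ s ∈ Icc (0:ℝ) t, q (Γ s) = γ s}
    with hS
  have hmono : ∀ t ∈ S, ∀ t', 0 ≤ t' → t' ≤ t → t' ∈ S := by
    rintro t ⟨Γ, h1, h2, h3⟩ t' h0 ht'
    exact ⟨Γ, h1, h2, fun s hs => h3 s ⟨hs.1, hs.2.trans ht'⟩⟩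
  have hsub : Icc (0:ℝ) 1 ⊆ S := by
    refine IsClosed.Icc_subset_of_forall_exists_gt ?_ ⟨fun t => f, continuous_const, rfl,
      fun s hs => by rw [le_antisymm hs.2 hs.1, hf]⟩ ?_
    · rw [← closure_subset_iff_isClosed]
      intro t ht
      have htI : t ∈ Icc (0:ℝ) 1 :=
        (closure_minimal (inter_subset_right) isClosed_Icc) ht
      refine ⟨?_, htI⟩
      obtain ⟨_, T, hT⟩ := cov_triv hq (γ t) (mem_range_of_connected hq hγ 0 t ⟨f, hf⟩)
      have hopen : IsOpen (γ ⁻¹' T.baseSet) := T.open_baseSet.preimage hγ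
      obtain ⟨δ, hδ, hball⟩ := Metric.isOpen_iff.mp hopen t hT
      obtain ⟨t', ht', hdist⟩ := Metric.mem_closure_iff.mp ht δ hδ
      obtain ⟨⟨Γ, h1, h2, h3⟩, ht'I⟩ := ht'
      have habs : |t - t'| < δ := by rwa [Real.dist_eq] at hdist
      rw [abs_lt] at habs
      rcases le_total t t' with h | h
      · exact hmono t' ⟨Γ, h1, h2, h3⟩ t htI.1 h
      · obtain ⟨Γ', h1', h2', h3'⟩ := ext_step hγ h1 ht'I.1 h h3 T (fun s hs => hball (by
          rw [Metric.mem_ball, Real.dist_eq, abs_lt]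
          have hs1 := hs.1; have hs2 := hs.2
          constructor <;> linarith))
        exact ⟨Γ', h1', h2'.trans h2, h3'⟩
    · rintro x ⟨hxS, hx0, hx1⟩ y hy
      obtain ⟨_, T, hT⟩ := cov_triv hq (γ x) (mem_range_of_connected hq hγ 0 x ⟨f, hf⟩)
      have hopen : IsOpen (γ ⁻¹' T.baseSet) := T.open_baseSet.preimage hγ
      obtain ⟨δ, hδ, hball⟩ := Metric.isOpen_iff.mp hopen x hT
      refine ⟨min y (x + δ/2), ?_, lt_min (mem_Ioi.mp hy) (by linarith : x < x + δ/2),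
        min_le_left _ _⟩
      obtain ⟨Γ, h1, h2, h3⟩ := hxS
      obtain ⟨Γ', h1', h2', h3'⟩ := ext_step hγ h1 hx0
        (le_min (le_of_lt (mem_Ioi.mp hy)) (by linarith : x ≤ x + δ/2)) h3 T (fun s hs => hball (by
          rw [Metric.mem_ball, Real.dist_eq, abs_lt]
          have hs1 := hs.1
          have hs2 := hs.2.trans (min_le_right y (x + δ/2))
          constructor <;> linarith))
      exact ⟨Γ', h1', h2'.trans h2, h3'⟩
  obtain ⟨Γ, h1, h2, h3⟩ := hsub (right_mem_Icc.mpr zero_le_one)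
  refine ⟨fun t => Γ ((projIcc (0:ℝ) 1 zero_le_one t : I) : ℝ), ?_, ?_, ?_⟩
  · exact h1.comp (continuous_subtype_val.comp continuous_projIcc)
  · show Γ ((projIcc (0:ℝ) 1 zero_le_one 0 : I) : ℝ) = f
    rw [show ((projIcc (0:ℝ) 1 zero_le_one 0 : I) : ℝ) = 0 by simp]
    exact h2
  · intro t
    rw [h3 _ (projIcc 0 1 zero_le_one t).2, ← hcl t]


/-- Lifts of homotopic paths starting at the same point end at the same point. -/
lemma lift_homotopic (hq : IsCoveringMap q) {x y : X} (γ₀ γ₁ : Path x y)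
    (hhom : Path.Homotopic γ₀ γ₁) {Γ₀ Γ₁ : ℝ → F}
    (h₀c : Continuous Γ₀) (h₁c : Continuous Γ₁)
    (h₀ : ∀ t, q (Γ₀ t) = γ₀.extend t) (h₁ : ∀ t, q (Γ₁ t) = γ₁.extend t)
    (h00 : Γ₀ 0 = Γ₁ 0) : Γ₀ 1 = Γ₁ 1 := by
  obtain ⟨H⟩ := hhom
  set pr : ℝ → I := fun t => projIcc (0:ℝ) 1 zero_le_one t with hpr
  have hprc : Continuous pr := continuous_projIcc
  have hpr0 : pr 0 = 0 := by simp [hpr]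
  have hpr1 : pr 1 = 1 := by simp [hpr]
  have hHc : Continuous fun st : I × ℝ => H (st.1, pr st.2) :=
    H.continuous.comp (continuous_fst.prodMk (hprc.comp continuous_snd))
  have hcol : ∀ s : I, ∃ Γ : ℝ → F, Continuous Γ ∧ Γ 0 = Γ₀ 0 ∧
      ∀ t, q (Γ t) = H (s, pr t) := by
    intro s
    refine lift_exists hq (hHc.comp (continuous_const.prodMk continuous_id)) ?_ (Γ₀ 0) ?_
    · intro t
      exact congrArg (fun u => H (s, u)) (projIcc_val zero_le_one (pr t)).symm
    · rw [h₀ 0]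
      show γ₀.extend 0 = H (s, pr 0)
      rw [Path.extend_zero, hpr0]
      exact (H.source s).symm
  choose Γc hc1 hc2 hc3 using hcol
  set A : Set ℝ := {t | Continuous fun s : I => Γc s t} with hA
  have key : ∀ t₀ : ℝ, ∃ δ > 0, ∀ t' t'' : ℝ, |t' - t₀| < δ → |t'' - t₀| < δ →
      t' ∈ A → t'' ∈ A := by
    intro t₀
    have hloc : ∀ s₀ : I, ∃ (u : Set I) (ε : ℝ), IsOpen u ∧ s₀ ∈ u ∧ 0 < ε ∧
        ∀ t' t'' : ℝ, |t' - t₀| < ε → |t'' - t₀| < ε →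
          ContinuousOn (fun s => Γc s t') u → ContinuousOn (fun s => Γc s t'') u := by
      intro s₀
      obtain ⟨_, T, hT⟩ := cov_triv hq (H (s₀, pr t₀)) (mem_range_of_connected hq hHc (s₀, 0) (s₀, t₀)
        ⟨Γ₀ 0, by show q (Γ₀ 0) = H (s₀, pr 0); rw [h₀ 0, Path.extend_zero, hpr0]; exact (H.source s₀).symm⟩)
      have hopen : IsOpen ((fun st : I × ℝ => H (st.1, pr st.2)) ⁻¹' T.baseSet) :=
        T.open_baseSet.preimage hHc
      obtain ⟨u, v, hu, hv, hs₀u, ht₀v, huv⟩ := isOpen_prod_iff.mp hopen s₀ t₀ hT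
      obtain ⟨ε, hε, hball⟩ := Metric.isOpen_iff.mp hv t₀ ht₀v
      refine ⟨u, ε, hu, hs₀u, hε, ?_⟩
      intro t' t'' ht' ht'' hcont
      have hbase : ∀ s ∈ u, ∀ r : ℝ, |r - t₀| < ε → H (s, pr r) ∈ T.baseSet := fun s hs r hr =>
        huv (mk_mem_prod hs (hball (by rwa [Metric.mem_ball, Real.dist_eq])))
      have hsrc' : ∀ s ∈ u, Γc s t' ∈ T.source := fun s hs =>
        T.mem_source.mpr (by rw [hc3]; exact hbase s hs t' ht')
      have hformula : ∀ s ∈ u,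
          Γc s t'' = T.toOpenPartialHomeomorph.symm (H (s, pr t''), (T (Γc s t')).2) := by
        intro s hs
        have huIcc : ∀ r ∈ uIcc t' t'', |r - t₀| < ε := by
          intro r hr
          have a1 := abs_lt.mp ht'
          have a2 := abs_lt.mp ht''
          rw [mem_uIcc] at hr
          rw [abs_lt]
          rcases hr with ⟨hr1, hr2⟩ | ⟨hr1, hr2⟩ <;> constructor <;> linarith
        have e1 : ContinuousOn (fun r => Γc s r) (uIcc t' t'') := (hc1 s).continuousOn
        have e2 : ContinuousOn
            (fun r => T.toOpenPartialHomeomorph.symm (H (s, pr r), (T (Γc s t')).2))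
            (uIcc t' t'') := by
          refine T.toOpenPartialHomeomorph.continuousOn_symm.comp
            (((hHc.comp (continuous_const.prodMk continuous_id)).continuousOn).prodMk
              continuousOn_const) (fun r hr => ?_)
          exact T.mem_target.mpr (hbase s hs r (huIcc r hr))
        have heq : EqOn (q ∘ fun r => Γc s r)
            (q ∘ fun r => T.toOpenPartialHomeomorph.symm (H (s, pr r), (T (Γc s t')).2))
            (uIcc t' t'') := by
          intro r hr
          show q (Γc s r) = q (T.toOpenPartialHomeomorph.symm (H (s, pr r), (T (Γc s t')).2))
          rw [hc3 s r, T.proj_symm_apply' (hbase s hs r (huIcc r hr))]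
        have hat : Γc s t' = T.toOpenPartialHomeomorph.symm (H (s, pr t'), (T (Γc s t')).2) := by
          have hb : q (Γc s t') ∈ T.baseSet := by rw [hc3]; exact hbase s hs t' ht'
          have h5 := T.mk_proj_snd' hb
          rw [show H (s, pr t') = q (Γc s t') from (hc3 s t').symm, h5]
          exact (T.toOpenPartialHomeomorph.left_inv (hsrc' s hs)).symm
        exact (hq.eqOn_of_comp_eqOn isPreconnected_uIcc e1 e2 heq left_mem_uIcc hat)
          right_mem_uIcc
      refine ContinuousOn.congr ?_ hformula
      refine T.toOpenPartialHomeomorph.continuousOn_symm.comp ?_ (fun s hs => ?_)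
      · refine ContinuousOn.prodMk ?_ ?_
        · exact (hHc.comp (continuous_id.prodMk continuous_const)).continuousOn
        · exact continuous_snd.comp_continuousOn (T.continuousOn_toFun.comp hcont (hsrc'))
      · exact T.mem_target.mpr (hbase s hs t'' ht'')
    choose u ε hu hmem hε htrans using hloc
    obtain ⟨sf, hsf⟩ := isCompact_univ.elim_finite_subcover u hu
      (fun s _ => mem_iUnion.mpr ⟨s, hmem s⟩)
    have hne : sf.Nonempty := by
      by_contra h
      rw [Finset.not_nonempty_iff_eq_empty] at h
      have := hsf (mem_univ (0:I))
      simp [h] at this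
    refine ⟨sf.inf' hne ε, ?_, ?_⟩
    · rw [gt_iff_lt, Finset.lt_inf'_iff]; exact fun i _ => hε i
    · intro t' t'' ht' ht'' hAmem
      rw [hA, mem_setOf_eq, continuous_iff_continuousAt]
      intro s₀
      have hs₀ := hsf (mem_univ s₀)
      rw [mem_iUnion₂] at hs₀
      obtain ⟨i, hisf, hs₀i⟩ := hs₀
      have hδi : sf.inf' hne ε ≤ ε i := Finset.inf'_le _ hisf
      exact ((htrans i t' t'' (lt_of_lt_of_le ht' hδi) (lt_of_lt_of_le ht'' hδi)
        hAmem.continuousOn)).continuousAt ((hu i).mem_nhds hs₀i)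
  have h0A : (0:ℝ) ∈ A := by
    rw [hA, mem_setOf_eq, show (fun s : I => Γc s 0) = fun _ => Γ₀ 0 from funext fun s => hc2 s]
    exact continuous_const
  have hopenA : IsOpen A := by
    rw [Metric.isOpen_iff]
    intro t ht
    obtain ⟨δ, hδ, htr⟩ := key t
    exact ⟨δ, hδ, fun t'' ht'' => htr t t'' (by simpa using hδ)
      (by rwa [Metric.mem_ball, Real.dist_eq] at ht'') ht⟩
  have hclosedA : IsClosed A := by
    rw [← closure_subset_iff_isClosed]
    intro t ht
    obtain ⟨δ, hδ, htr⟩ := key t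
    obtain ⟨t', ht', hdist⟩ := Metric.mem_closure_iff.mp ht δ hδ
    refine htr t' t ?_ (by simpa using hδ) ht'
    rw [← Real.dist_eq, dist_comm]
    exact hdist
  have h1A : (1:ℝ) ∈ A := by
    rw [IsClopen.eq_univ ⟨hclosedA, hopenA⟩ ⟨0, h0A⟩]
    exact mem_univ 1
  haveI : DiscreteTopology (q ⁻¹' {y} : Set F) := (hq y).1
  have hψmem : ∀ s : I, Γc s 1 ∈ (q ⁻¹' {y} : Set F) := by
    intro s
    rw [mem_preimage, mem_singleton_iff, hc3 s 1, hpr1]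
    exact H.target s
  have hψc : Continuous (fun s : I => (⟨Γc s 1, hψmem s⟩ : (q ⁻¹' {y} : Set F))) :=
    Continuous.subtype_mk h1A _
  have hends : Γc 0 1 = Γc 1 1 :=
    congrArg Subtype.val
      (((IsLocallyConstant.iff_continuous _).mpr hψc).apply_eq_of_preconnectedSpace 0 1)
  have hid0 : Γ₀ = Γc 0 := by
    refine hq.eq_of_comp_eq h₀c (hc1 0) (funext fun t => ?_) 0 (hc2 0).symm
    show q (Γ₀ t) = q (Γc 0 t)
    rw [h₀ t, hc3 0 t, H.apply_zero]
    rfl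
  have hid1 : Γ₁ = Γc 1 := by
    refine hq.eq_of_comp_eq h₁c (hc1 1) (funext fun t => ?_) 0 ?_
    · show q (Γ₁ t) = q (Γc 1 t)
      rw [h₁ t, hc3 1 t, H.apply_one]
      rfl
    · rw [hc2 1, h00]
  rw [hid0, hid1, hends]

end lifting

/-- The pointed universal covering is initial among pointed coverings: if `p : E → X` is a
covering map with `E` simply connected and locally path-connected, `X` is connected and locally
path-connected, and `q : F → X` is any covering map, then for basepoints `e₀`, `f₀` over
`x₀` there is a unique continuous map `g : E → F` with `q ∘ g = p` and `g e₀ = f₀`. -/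
theorem universal_covering_initial {X E F : Type u}
    [TopologicalSpace X] [TopologicalSpace E] [TopologicalSpace F]
    [ConnectedSpace X] [LocallyPathConnectedSpace X] (x₀ : X)
    {p : E → X} {q : F → X} (hp : IsCoveringMap p) (hq : IsCoveringMap q)
    [SimplyConnectedSpace E] [LocallyPathConnectedSpace E]
    (e₀ : E) (f₀ : F) (hpe : p e₀ = x₀) (hqf : q f₀ = x₀) :
    ∃! g : C(E, F), (∀ e, q (g e) = p e) ∧ g e₀ = f₀ := by
  classical
  have hpc := hp.continuous
  have hex : ∀ e : E, ∃ Γ : ℝ → F, Continuous Γ ∧ Γ 0 = f₀ ∧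
      ∀ t, q (Γ t) = ((PathConnectedSpace.somePath e₀ e).map hpc).extend t := by
    intro e
    refine lift_exists hq (Path.continuous_extend _) ?_ f₀ ?_
    · intro t
      exact congrArg ((PathConnectedSpace.somePath e₀ e).map hpc)
        (projIcc_val zero_le_one (projIcc (0:ℝ) 1 zero_le_one t)).symm
    · rw [Path.extend_zero]
      show q f₀ = p e₀
      rw [hqf, hpe]
  choose Γm hm1 hm2 hm3 using hex
  set g : E → F := fun e => Γm e 1 with hg
  have hwd : ∀ (e : E) (α : Path e₀ e) (Γ : ℝ → F), Continuous Γ → Γ 0 = f₀ →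
      (∀ t, q (Γ t) = (α.map hpc).extend t) → Γ 1 = g e := by
    intro e α Γ hΓc hΓ0 hΓl
    exact lift_homotopic hq (α.map hpc) ((PathConnectedSpace.somePath e₀ e).map hpc)
      ((SimplyConnectedSpace.paths_homotopic α _).map ⟨p, hpc⟩) hΓc (hm1 e) hΓl (hm3 e)
      (by rw [hΓ0, hm2 e])
  have hqg : ∀ e, q (g e) = p e := by
    intro e
    show q (Γm e 1) = p e
    rw [hm3 e 1, Path.extend_one]
  have hg0 : g e₀ = f₀ := by
    refine (hwd e₀ (Path.refl e₀) (fun _ => f₀) continuous_const rfl ?_).symm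
    intro t
    show q f₀ = p ((Path.refl e₀) (projIcc 0 1 zero_le_one t))
    rw [hqf]
    show x₀ = p e₀
    exact hpe.symm
  have hgc : Continuous g := by
    rw [continuous_iff_continuousAt]
    intro e₁
    obtain ⟨_, T, hT⟩ := cov_triv hq (p e₁) (mem_range_of_connected hq continuous_id x₀ (p e₁) ⟨f₀, hqf⟩)
    have hnb : p ⁻¹' T.baseSet ∈ nhds e₁ := (T.open_baseSet.preimage hpc).mem_nhds hT
    obtain ⟨W, ⟨hWnhds, hWpc⟩, hWsub⟩ := (path_connected_basis e₁).mem_iff.mp hnb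
    set c := (T (g e₁)).2 with hc
    have hqg1 : q (g e₁) ∈ T.baseSet := by rw [hqg e₁]; exact hT
    have hsrc : g e₁ ∈ T.source := T.mem_source.mpr hqg1
    have hfix : T.toOpenPartialHomeomorph.symm (p e₁, c) = g e₁ := by
      rw [hc]
      have h1 : ((p e₁ : X), (T (g e₁)).2) = (q (g e₁), (T (g e₁)).2) := by rw [hqg e₁]
      rw [h1, T.mk_proj_snd' hqg1]
      exact T.toOpenPartialHomeomorph.left_inv hsrc
    have hclaim : ∀ e ∈ W, g e = T.toOpenPartialHomeomorph.symm (p e, c) := by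
      intro e he
      obtain ⟨β, hβ⟩ := hWpc.joinedIn e₁ (mem_of_mem_nhds hWnhds) e he
      set α := (PathConnectedSpace.somePath e₀ e₁).trans β with hα
      have hαW : ∀ v : I, 1/2 ≤ (v:ℝ) → α v ∈ W := by
        intro v hv
        rw [hα, Path.trans_apply]
        split_ifs with h
        · rw [show (⟨2*(v:ℝ), by constructor <;> [linarith [v.2.1]; linarith]⟩ : I) = 1 from
            Subtype.ext (by simp only [Icc.coe_one]; linarith)]
          rw [Path.target]
          exact mem_of_mem_nhds hWnhds
        · exact hβ _
      have hbaseΛ : ∀ t : ℝ, p (α.extend (max t (1/2))) ∈ T.baseSet := by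
        intro t
        refine hWsub (hαW _ ?_)
        show (1/2:ℝ) ≤ max 0 (min 1 (max t (1/2)))
        exact le_trans (le_min (by norm_num) (le_max_right _ _)) (le_max_right 0 _)
      have hhalf : α.extend (1/2 : ℝ) = e₁ := by
        show α (projIcc 0 1 zero_le_one (1/2:ℝ)) = e₁
        rw [projIcc_of_mem zero_le_one (by constructor <;> norm_num : (1/2:ℝ) ∈ Icc (0:ℝ) 1)]
        rw [hα, Path.trans_apply]
        split_ifs with h
        · rw [show (⟨2*((1:ℝ)/2), by norm_num⟩ : I) = 1 from Subtype.ext (by norm_num)]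
          exact Path.target _
        · exact absurd le_rfl h
      set Λ : ℝ → F := fun t => if t ≤ (1/2:ℝ) then Γm e₁ (2*t)
        else T.toOpenPartialHomeomorph.symm (p (α.extend (max t (1/2))), c) with hΛ
      have hbound : Γm e₁ (2*(1/2:ℝ)) = T.toOpenPartialHomeomorph.symm (p (α.extend (max (1/2:ℝ) (1/2))), c) := by
        rw [max_self, hhalf]
        rw [hfix]
        norm_num
        rfl
      have hΛc : Continuous Λ := by
        rw [hΛ]
        refine Continuous.if_le ((hm1 e₁).comp (continuous_const.mul continuous_id))
          ?_ continuous_id continuous_const ?_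
        · exact T.toOpenPartialHomeomorph.continuousOn_symm.comp_continuous
            ((hpc.comp (α.continuous_extend.comp (continuous_id.max continuous_const))).prodMk
              continuous_const) (fun t => T.mem_target.mpr (hbaseΛ t))
        · intro t ht
          rw [ht, hbound]
      have hΛ0 : Λ 0 = f₀ := by
        rw [hΛ]
        simp only [if_pos (by norm_num : (0:ℝ) ≤ 1/2), mul_zero]
        exact hm2 e₁
      have hΛlift : ∀ t, q (Λ t) = (α.map hpc).extend t := by
        intro t
        rw [hΛ]
        by_cases h : t ≤ (1/2:ℝ)
        · simp only [if_pos h]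
          rw [hm3 e₁ (2*t)]
          show p ((PathConnectedSpace.somePath e₀ e₁) (projIcc 0 1 zero_le_one (2*t)))
            = p (α (projIcc 0 1 zero_le_one t))
          congr 1
          rcases le_total t 0 with h0 | h0
          · rw [projIcc_of_le_left zero_le_one h0,
              projIcc_of_le_left zero_le_one (by linarith : 2*t ≤ 0)]
            rw [show (⟨(0:ℝ), left_mem_Icc.mpr zero_le_one⟩ : I) = 0 from rfl]
            rw [Path.source, hα, Path.source]
          · rw [projIcc_of_mem zero_le_one (⟨h0, by linarith⟩ : t ∈ Icc (0:ℝ) 1),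
              projIcc_of_mem zero_le_one (⟨by linarith, by linarith⟩ : 2*t ∈ Icc (0:ℝ) 1)]
            rw [hα, Path.trans_apply]
            split_ifs with h2
            · congr 1
            · exact absurd h h2
        · simp only [if_neg h]
          rw [T.proj_symm_apply' (hbaseΛ t), max_eq_left (le_of_lt (not_le.mp h))]
          rfl
      rw [← hwd e α Λ hΛc hΛ0 hΛlift, hΛ]
      simp only [if_neg (by norm_num : ¬ (1:ℝ) ≤ 1/2)]
      rw [max_eq_left (by norm_num : (1/2:ℝ) ≤ 1), Path.extend_one]
    have heq : g =ᶠ[nhds e₁] fun e => T.toOpenPartialHomeomorph.symm (p e, c) :=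
      Filter.eventually_of_mem hWnhds hclaim
    have hcont2 : ContinuousAt (fun e => T.toOpenPartialHomeomorph.symm (p e, c)) e₁ := by
      have h1 : ContinuousAt (T.toOpenPartialHomeomorph.symm) (p e₁, c) :=
        T.toOpenPartialHomeomorph.symm.continuousAt
          (by rw [OpenPartialHomeomorph.symm_source]; exact T.mem_target.mpr hT)
      have h2 : ContinuousAt (fun e : E => (p e, c)) e₁ :=
        (hpc.prodMk continuous_const).continuousAt
      exact (ContinuousAt.comp h1 h2 :
        ContinuousAt (T.toOpenPartialHomeomorph.symm ∘ fun e : E => (p e, c)) e₁)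
    exact hcont2.congr heq.symm
  refine ⟨⟨g, hgc⟩, ⟨hqg, hg0⟩, ?_⟩
  rintro g' ⟨hg'1, hg'2⟩
  have hfun : (g' : E → F) = g := hq.eq_of_comp_eq g'.continuous hgc
    (funext fun e => (hg'1 e).trans (hqg e).symm) e₀ (by rw [hg'2, hg0])
  exact ContinuousMap.ext fun e => congrFun hfun e
end

section
/- Let p : E → X be a covering map, e₀ ∈ E and x₀ = p(e₀). For every n ≥ 2, the map πₙ(E, e₀) → πₙ(X, x₀) induced by postcomposition with p (sending the based homotopy class of a based map γ : (Iⁿ, ∂Iⁿ) → (E, e₀) to the class of p ∘ γ) is a group isomorphism, i.e., it is a bijective group homomorphism. -/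
open scoped Topology Topology.Homotopy

universe u

/-- The map induced on `N`-th homotopy groups by postcomposition with a continuous map `f`:
it sends the based homotopy class of `γ : (I^N, ∂I^N) → (E, e₀)` to the class of `f ∘ γ`. -/
noncomputable def homotopyGroupMap (N : Type) [DecidableEq N]
    {E X : Type u} [TopologicalSpace E] [TopologicalSpace X] (f : C(E, X)) (e₀ : E) :
    HomotopyGroup N E e₀ → HomotopyGroup N X (f e₀) :=
  Quotient.map
    (fun γ => ⟨f.comp γ.1, fun y hy => congrArg f (γ.2 y hy)⟩)
    (fun _ _ h => h.map fun H => H.compContinuousMap f)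

open scoped unitInterval



section Glue
variable {α β : Type*} [TopologicalSpace α] [TopologicalSpace β]

open scoped Classical in
theorem myGlue {s t : Set α} (hs : IsClosed s) (ht : IsClosed t) {g₁ g₂ : α → β}
    (h₁ : ContinuousOn g₁ s) (h₂ : ContinuousOn g₂ t) (heq : Set.EqOn g₁ g₂ (s ∩ t)) :
    ContinuousOn (fun y => if y ∈ s then g₁ y else g₂ y) (s ∪ t) := by
  classical
  set g : α → β := fun y => if y ∈ s then g₁ y else g₂ y with hg
  have hgs : Set.EqOn g g₁ s := fun y hy => by simp [hg, hy]
  have hgt : Set.EqOn g g₂ t := by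
    intro y hy
    by_cases hy' : y ∈ s
    · simpa [hg, hy'] using heq ⟨hy', hy⟩
    · simp [hg, hy']
  intro x hx
  have hws : x ∈ s → ContinuousWithinAt g s x := fun h => ((h₁ x h).congr hgs (hgs h))
  have hwt : x ∈ t → ContinuousWithinAt g t x := fun h => ((h₂ x h).congr hgt (hgt h))
  have hns : x ∉ s → ContinuousWithinAt g s x := fun h =>
    continuousWithinAt_of_notMem_closure (by rwa [hs.closure_eq])
  have hnt : x ∉ t → ContinuousWithinAt g t x := fun h =>
    continuousWithinAt_of_notMem_closure (by rwa [ht.closure_eq])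
  by_cases h1 : x ∈ s <;> by_cases h2 : x ∈ t
  · exact (hws h1).union (hwt h2)
  · exact (hws h1).union (hnt h2)
  · exact (hns h1).union (hwt h2)
  · exact absurd hx (by simp [h1, h2])

end Glue

section LocalLift
variable {E X : Type u} [TopologicalSpace E] [TopologicalSpace X] {p : E → X}

/-- Lift over a set mapping into the base set of a trivialization. -/
theorem exists_localLift {Y : Type*} [TopologicalSpace Y] {F : Type*} [TopologicalSpace F]
    (T : Bundle.Trivialization F p) {f : Y → X} (hf : Continuous f) {A : Set Y}
    (hA : Set.MapsTo f A T.baseSet) {a₀ : Y} (ha₀ : a₀ ∈ A) {e : E} (he : p e = f a₀) :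
    ∃ g : Y → E, ContinuousOn g A ∧ Set.EqOn (p ∘ g) f A ∧ g a₀ = e := by
  have hes : e ∈ T.source := T.mem_source.2 (he ▸ hA ha₀)
  refine ⟨fun y => T.toPartialHomeomorph.symm (f y, (T e).2), ?_, ?_, ?_⟩
  · apply T.toPartialHomeomorph.continuousOn_symm.comp
    · exact (hf.prodMk continuous_const).continuousOn
    · intro y hy
      rw [T.target_eq]
      exact ⟨hA hy, trivial⟩
  · intro y hy
    exact T.proj_symm_apply (by rw [T.target_eq]; exact ⟨hA hy, trivial⟩)
  · show T.toPartialHomeomorph.symm (f a₀, (T e).2) = e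
    have : (f a₀, (T e).2) = T e := by
      rw [← he, Prod.ext_iff]
      exact ⟨(T.coe_fst hes).symm, rfl⟩
    rw [this]
    exact T.toPartialHomeomorph.left_inv hes

theorem exists_localLift' (hp : IsCoveringMap p) (x : X) {Y : Type*} [TopologicalSpace Y]
    {f : Y → X} (hf : Continuous f) {A : Set Y}
    (hA : Set.MapsTo f A (hp x).2.choose) {a₀ : Y} (ha₀ : a₀ ∈ A) {e : E} (he : p e = f a₀) :
    ∃ g : Y → E, ContinuousOn g A ∧ Set.EqOn (p ∘ g) f A ∧ g a₀ = e := by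
  have hmem : p e ∈ (hp x).2.choose := he ▸ hA ha₀
  have : Nonempty (p ⁻¹' {x}) := ⟨((hp x).2.choose_spec.2.2.2.choose ⟨e, hmem⟩).2⟩
  exact exists_localLift (hp x).toTrivialization hf hA ha₀ he

end LocalLift


namespace CubeLift

variable {m Nn : ℕ}

/-- closed grid cell of side `1/(Nn+1)` -/
def cell (c : Fin m → Fin (Nn + 1)) : Set (Fin m → I) :=
  {y | ∀ i, (c i : ℝ) / (Nn + 1) ≤ y i ∧ (y i : ℝ) ≤ ((c i : ℝ) + 1) / (Nn + 1)}

lemma cast_le (c : Fin m → Fin (Nn + 1)) (i : Fin m) : (c i : ℝ) ≤ Nn := by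
  have := (c i).isLt
  exact_mod_cast Nat.le_of_lt_succ this

lemma Npos : (0:ℝ) < Nn + 1 := by positivity

/-- lowest corner of a cell -/
noncomputable def corner (c : Fin m → Fin (Nn + 1)) : Fin m → I := fun i =>
  ⟨(c i : ℝ) / (Nn + 1), by
    constructor
    · positivity
    · rw [div_le_one (by positivity)]
      have := cast_le c i
      linarith⟩

lemma corner_apply (c : Fin m → Fin (Nn + 1)) (i : Fin m) :
    (corner c i : ℝ) = (c i : ℝ) / (Nn + 1) := rfl

lemma corner_mem_cell (c : Fin m → Fin (Nn + 1)) : corner c ∈ cell c := fun i =>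
  ⟨le_refl _, (div_le_div_iff_of_pos_right (Npos)).2 (by linarith)⟩

/-- parametrization of a cell by the cube -/
noncomputable def cellMap (c : Fin m → Fin (Nn + 1)) : (Fin m → I) → (Fin m → I) := fun y i =>
  ⟨((c i : ℝ) + y i) / (Nn + 1), by
    have h0 := (y i).2.1
    have h1 := (y i).2.2
    have hc := cast_le c i
    constructor
    · positivity
    · rw [div_le_one (by positivity)]; linarith⟩

lemma continuous_cellMap (c : Fin m → Fin (Nn + 1)) : Continuous (cellMap c) := by
  refine continuous_pi fun i => Continuous.subtype_mk (f := fun y : Fin m → I => ((c i : ℝ) + y i) / (Nn + 1)) ?_ _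
  exact (continuous_const.add ((continuous_subtype_val.comp (continuous_apply i)))).div_const _

/-- inverse parametrization -/
noncomputable def cellInv (c : Fin m → Fin (Nn + 1)) (y : Fin m → I) (hy : y ∈ cell c) :
    Fin m → I := fun j =>
  ⟨(Nn + 1) * y j - c j, by
    obtain ⟨hl, hr⟩ := hy j
    have h1 : (c j : ℝ) ≤ (Nn + 1) * y j := (div_le_iff₀' Npos).1 hl
    have h2 : ((Nn:ℝ) + 1) * y j ≤ c j + 1 := (le_div_iff₀' Npos).1 hr
    constructor <;> [linarith; linarith]⟩

lemma cellMap_cellInv (c : Fin m → Fin (Nn + 1)) (y : Fin m → I) (hy : y ∈ cell c) :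
    cellMap c (cellInv c y hy) = y := by
  funext j
  apply Subtype.ext
  show ((c j : ℝ) + ((Nn + 1) * y j - c j)) / (Nn + 1) = y j
  field_simp
  ring

lemma cellMap_image (c : Fin m → Fin (Nn + 1)) : cellMap c '' Set.univ = cell c := by
  apply Set.Subset.antisymm
  · rintro _ ⟨y, -, rfl⟩ i
    have h0 := (y i).2.1
    have h1 := (y i).2.2
    constructor
    · exact (div_le_div_iff_of_pos_right Npos).2 (by linarith)
    · exact (div_le_div_iff_of_pos_right Npos).2 (by linarith)
  · intro y hy
    exact ⟨cellInv c y hy, trivial, cellMap_cellInv c y hy⟩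

lemma isCompact_cell (c : Fin m → Fin (Nn + 1)) : IsCompact (cell c) := by
  rw [← cellMap_image]
  exact isCompact_univ.image (continuous_cellMap c)

lemma isClosed_cell (c : Fin m → Fin (Nn + 1)) : IsClosed (cell c) :=
  (isCompact_cell c).isClosed

lemma isPreconnected_cell (c : Fin m → Fin (Nn + 1)) : IsPreconnected (cell c) := by
  rw [← cellMap_image]
  exact (isPreconnected_univ).image _ (continuous_cellMap c).continuousOn

/-- bottom face of a cell in direction `i` -/
def face (c : Fin m → Fin (Nn + 1)) (i : Fin m) : Set (Fin m → I) :=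
  cell c ∩ {y | y i = corner c i}

lemma corner_mem_face (c : Fin m → Fin (Nn + 1)) (i : Fin m) : corner c ∈ face c i :=
  ⟨corner_mem_cell c, rfl⟩

lemma isPreconnected_face (c : Fin m → Fin (Nn + 1)) (i : Fin m) :
    IsPreconnected (face c i) := by
  have hcont : Continuous (fun y => cellMap c (Function.update y i 0)) := by
    refine (continuous_cellMap c).comp (continuous_pi fun j => ?_)
    rcases eq_or_ne j i with rfl | h
    · simp only [Function.update_self]; exact continuous_const
    · simp only [Function.update_of_ne h]; exact continuous_apply j
  have himg : (fun y => cellMap c (Function.update y i 0)) '' Set.univ = face c i := by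
    apply Set.Subset.antisymm
    · rintro _ ⟨y, -, rfl⟩
      refine ⟨?_, ?_⟩
      · rw [← cellMap_image]; exact ⟨_, trivial, rfl⟩
      · apply Subtype.ext
        show ((c i : ℝ) + (Function.update y i 0 i : I)) / (Nn + 1) = (c i : ℝ) / (Nn + 1)
        rw [Function.update_self]
        norm_num
    · rintro y ⟨hy, hyi⟩
      have hyir : (y i : ℝ) = (c i : ℝ) / (Nn + 1) := congrArg Subtype.val hyi
      have hzi : cellInv c y hy i = 0 := by
        apply Subtype.ext
        show ((Nn:ℝ) + 1) * y i - c i = 0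
        rw [hyir]
        field_simp
        ring
      refine ⟨cellInv c y hy, trivial, ?_⟩
      show cellMap c (Function.update (cellInv c y hy) i 0) = y
      rw [← hzi, Function.update_eq_self]
      exact cellMap_cellInv c y hy
  rw [← himg]
  exact isPreconnected_univ.image _ hcont.continuousOn

end CubeLift


namespace CubeLift

variable {m Nn : ℕ}

/-- the weight of a cell: its index in the enumeration order -/
def w (c : Fin m → Fin (Nn + 1)) : ℕ := finFunctionFinEquiv c

lemma w_lt (c : Fin m → Fin (Nn + 1)) : w c < (Nn + 1) ^ m := (finFunctionFinEquiv c).isLt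

lemma w_injective : Function.Injective (w (m := m) (Nn := Nn)) := fun c c' h =>
  finFunctionFinEquiv.injective (Fin.ext h)

lemma w_zero : w (0 : Fin m → Fin (Nn + 1)) = 0 := by
  simp [w, finFunctionFinEquiv_apply]

lemma exists_lt_of_w_lt {c' c : Fin m → Fin (Nn + 1)} (h : w c' < w c) : ∃ i, c' i < c i := by
  by_contra hcon
  push_neg at hcon
  have : w c ≤ w c' := by
    simp only [w, finFunctionFinEquiv_apply]
    exact Finset.sum_le_sum fun i _ => Nat.mul_le_mul_right _ (hcon i)
  omega

lemma mem_face_of_mem_cells {c' c : Fin m → Fin (Nn + 1)} {y : Fin m → I} (hy' : y ∈ cell c')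
    (hy : y ∈ cell c) {i : Fin m} (hi : c' i < c i) : y ∈ face c i := by
  refine ⟨hy, ?_⟩
  have h1 : (c i : ℝ) / (Nn + 1) ≤ y i := (hy i).1
  have h2 : (y i : ℝ) ≤ ((c' i : ℝ) + 1) / (Nn + 1) := (hy' i).2
  have h3 : ((c' i : ℝ) + 1) ≤ c i := by exact_mod_cast Nat.succ_le_of_lt hi
  have h4 : ((c' i : ℝ) + 1) / (Nn + 1) ≤ (c i : ℝ) / (Nn + 1) :=
    (div_le_div_iff_of_pos_right Npos).2 h3
  exact Subtype.ext (le_antisymm (h2.trans h4) h1)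

/-- decrement of a cell index in direction `i` -/
def cdec (c : Fin m → Fin (Nn + 1)) (i : Fin m) : Fin m → Fin (Nn + 1) :=
  Function.update c i ⟨(c i : ℕ) - 1, lt_of_le_of_lt (Nat.sub_le _ _) (c i).isLt⟩

lemma w_cdec_lt {c : Fin m → Fin (Nn + 1)} {i : Fin m} (hi : c i ≠ 0) : w (cdec c i) < w c := by
  simp only [w, finFunctionFinEquiv_apply]
  apply Finset.sum_lt_sum
  · intro k _
    rcases eq_or_ne k i with rfl | h
    · exact Nat.mul_le_mul_right _ (by simp [cdec, Function.update_self])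
    · simp [cdec, Function.update_of_ne h]
  · refine ⟨i, Finset.mem_univ _, ?_⟩
    have hpos : 0 < (c i : ℕ) := by
      rcases Nat.eq_zero_or_pos (c i : ℕ) with h | h
      · exact absurd (Fin.ext h) hi
      · exact h
    have : ((cdec c i) i : ℕ) = (c i : ℕ) - 1 := by simp [cdec, Function.update_self]
    exact mul_lt_mul_of_pos_right (by omega) (by positivity)

lemma face_subset_cdec {c : Fin m → Fin (Nn + 1)} {i : Fin m} (hi : c i ≠ 0) :
    face c i ⊆ cell (cdec c i) := by
  rintro y ⟨hy, hyi⟩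
  intro j
  rcases eq_or_ne j i with rfl | h
  · have hyr : (y j : ℝ) = (c j : ℝ) / (Nn + 1) := congrArg Subtype.val hyi
    have hc1 : 1 ≤ (c j : ℕ) := by
      rcases Nat.eq_zero_or_pos (c j : ℕ) with h | h
      · exact absurd (Fin.ext h) hi
      · exact h
    have hcast : ((cdec c j j : ℕ) : ℝ) = (c j : ℝ) - 1 := by
      simp only [cdec, Function.update_self]
      push_cast [Nat.cast_sub hc1]
      ring
    constructor
    · rw [hyr]
      apply (div_le_div_iff_of_pos_right Npos).2
      rw [hcast]; linarith
    · rw [hyr]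
      apply (div_le_div_iff_of_pos_right Npos).2
      rw [hcast]; linarith
  · simpa [cdec, Function.update_of_ne h] using hy j

/-- every point of the cube is in some cell -/
lemma exists_mem_cell (y : Fin m → I) : ∃ c : Fin m → Fin (Nn + 1), y ∈ cell c := by
  refine ⟨fun i => ⟨min (⌊(y i : ℝ) * (Nn + 1)⌋₊) Nn, lt_of_le_of_lt (min_le_right _ _)
    (Nat.lt_succ_self _)⟩, fun i => ?_⟩
  set t : ℝ := (y i : ℝ) with ht
  have ht0 : 0 ≤ t := (y i).2.1
  have ht1 : t ≤ 1 := (y i).2.2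
  have hKt : (↑(min (⌊t * (Nn + 1)⌋₊) Nn) : ℝ) ≤ t * (Nn + 1) := by
    calc (↑(min (⌊t * (Nn + 1)⌋₊) Nn) : ℝ) ≤ (⌊t * (Nn + 1)⌋₊ : ℝ) := by
          exact_mod_cast min_le_left _ _
      _ ≤ t * (Nn + 1) := Nat.floor_le (by positivity)
  constructor
  · rw [div_le_iff₀ Npos]
    calc ((Fin.mk (min (⌊t * (Nn + 1)⌋₊) Nn) _ : Fin (Nn+1)) : ℝ) = _ := rfl
      _ ≤ t * (Nn + 1) := hKt
  · rw [le_div_iff₀ Npos]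
    show t * (Nn + 1) ≤ (↑(min (⌊t * (Nn + 1)⌋₊) Nn) : ℝ) + 1
    rcases le_total (⌊t * (Nn + 1)⌋₊) Nn with h | h
    · rw [min_eq_left h]
      have := Nat.lt_floor_add_one (t * (Nn + 1))
      push_cast at this ⊢
      linarith
    · rw [min_eq_right h]
      push_cast
      nlinarith
  done

/-- every cell is contained in a small ball around its corner -/
lemma cell_subset_ball {δ : ℝ} (hδ : 1 / (Nn + 1) < δ) (c : Fin m → Fin (Nn + 1)) :
    cell c ⊆ Metric.ball (corner c) δ := by
  intro y hy
  rw [Metric.mem_ball]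
  have hle : dist y (corner c) ≤ 1 / (Nn + 1) := by
    rw [dist_pi_le_iff (by positivity)]
    intro i
    obtain ⟨hl, hr⟩ := hy i
    rw [Subtype.dist_eq, Real.dist_eq, abs_le]
    have hcorner : ((corner c i : ℝ)) = (c i : ℝ) / (Nn + 1) := rfl
    have hsum : ((c i : ℝ) + 1) / (Nn + 1) = (c i : ℝ) / (Nn + 1) + 1 / (Nn + 1) := by ring
    constructor
    · rw [hcorner]; linarith
    · rw [hcorner]; linarith
  linarith

end CubeLift



namespace CubeLift

variable {m Nn : ℕ}

-- now real part D
open Classical in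
/-- union of the cells of index `< j` -/
noncomputable def Kset (m Nn : ℕ) (j : ℕ) : Set (Fin m → I) :=
  ⋃ (c : Fin m → Fin (Nn + 1)) (_ : w c < j), cell c

lemma isClosed_Kset (j : ℕ) : IsClosed (Kset m Nn j) := by
  apply Set.Finite.isClosed_biUnion (Set.toFinite _)
  exact fun c _ => isClosed_cell c

lemma zero_mem_cell_zero : (0 : Fin m → I) ∈ cell (0 : Fin m → Fin (Nn + 1)) := by
  intro i
  constructor
  · simp
  · show ((0:I) : ℝ) ≤ ((((0 : Fin m → Fin (Nn+1)) i : ℕ) : ℝ) + 1) / (Nn + 1)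
    simp
    positivity

lemma zero_mem_Kset {j : ℕ} (hj : 0 < j) : (0 : Fin m → I) ∈ Kset m Nn j :=
  Set.mem_iUnion.2 ⟨0, Set.mem_iUnion.2 ⟨by rw [w_zero]; exact hj, zero_mem_cell_zero⟩⟩

variable {E X : Type u} [TopologicalSpace E] [TopologicalSpace X] {p : E → X}

theorem exists_lift_on_Kset (hp : IsCoveringMap p) (f : C((Fin m → I), X)) {e : E}
    (he : p e = f 0)
    (hsub : ∀ c : Fin m → Fin (Nn + 1),
      ∃ x : X, Set.MapsTo f (cell c) (hp x).2.choose)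
    (j : ℕ) :
    ∃ g : (Fin m → I) → E, ContinuousOn g (Kset m Nn j) ∧
      Set.EqOn (p ∘ g) f (Kset m Nn j) ∧ g 0 = e := by
  classical
  induction j with
  | zero =>
    have hKe : Kset m Nn 0 = ∅ := by simp [Kset]
    exact ⟨fun _ => e, by rw [hKe]; exact continuousOn_empty _,
      by rw [hKe]; exact fun y hy => absurd hy (Set.notMem_empty y), rfl⟩
  | succ j ih =>
    obtain ⟨g, hgco, hgl, hg0⟩ := ih
    by_cases hex : ∃ c : Fin m → Fin (Nn + 1), w c = j
    · obtain ⟨c, hcj⟩ := hex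
      have hK1 : Kset m Nn (j + 1) = Kset m Nn j ∪ cell c := by
        ext y
        simp only [Kset, Set.mem_iUnion, Set.mem_union]
        constructor
        · rintro ⟨c', hc', hyc'⟩
          rcases Nat.lt_succ_iff_lt_or_eq.1 hc' with h | h
          · exact Or.inl ⟨c', h, hyc'⟩
          · exact Or.inr (w_injective (h.trans hcj.symm) ▸ hyc')
        · rintro (⟨c', h, hyc'⟩ | hyc)
          · exact ⟨c', Nat.lt_succ_of_lt h, hyc'⟩
          · exact ⟨c, by omega, hyc⟩
      obtain ⟨x, hx⟩ := hsub c
      rcases eq_or_ne c 0 with rfl | hc0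
      · have hj0 : j = 0 := by rw [← hcj, w_zero]
        subst hj0
        have hKe : Kset m Nn 0 = ∅ := by simp [Kset]
        obtain ⟨gc, hgcc, hgcl, hgc0⟩ :=
          exists_localLift' hp x f.continuous hx zero_mem_cell_zero he
        refine ⟨gc, ?_, ?_, hgc0⟩
        · rw [hK1, hKe, Set.empty_union]; exact hgcc
        · rw [hK1, hKe, Set.empty_union]; exact hgcl
      · have hj0 : 0 < j := by
          rcases Nat.eq_zero_or_pos j with h | h
          · exact absurd (w_injective (by rw [hcj, h, w_zero])) hc0
          · exact h
        have h0K : (0 : Fin m → I) ∈ Kset m Nn j := zero_mem_Kset hj0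
        obtain ⟨i₀, hi₀⟩ : ∃ i, c i ≠ 0 := by
          by_contra hcon; push_neg at hcon; exact hc0 (funext hcon)
        have hvK : corner c ∈ Kset m Nn j :=
          Set.mem_iUnion.2 ⟨cdec c i₀, Set.mem_iUnion.2
            ⟨by rw [← hcj]; exact w_cdec_lt hi₀, face_subset_cdec hi₀ (corner_mem_face c i₀)⟩⟩
        obtain ⟨gc, hgcc, hgcl, hgcv⟩ :=
          exists_localLift' hp x f.continuous hx (corner_mem_cell c)
            (e := g (corner c)) (hgl hvK)
        have hchar : Kset m Nn j ∩ cell c = ⋃₀ ((fun i => face c i) '' {i : Fin m | c i ≠ 0}) := by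
          ext y
          simp only [Set.mem_inter_iff, Set.mem_iUnion, Kset, Set.sUnion_image,
            Set.mem_setOf_eq]
          constructor
          · rintro ⟨⟨c', hc', hyc'⟩, hyc⟩
            obtain ⟨i, hi⟩ := exists_lt_of_w_lt (show w c' < w c by rw [hcj]; exact hc')
            refine ⟨i, fun h => ?_, mem_face_of_mem_cells hyc' hyc hi⟩
            rw [h] at hi
            exact Fin.not_lt_zero _ hi
          · rintro ⟨i, hi, hyf⟩
            exact ⟨⟨cdec c i, by rw [← hcj]; exact w_cdec_lt hi, face_subset_cdec hi hyf⟩, hyf.1⟩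
        have heq : Set.EqOn g gc (Kset m Nn j ∩ cell c) := by
          have hpc : IsPreconnected (Kset m Nn j ∩ cell c) := by
            rw [hchar]
            apply isPreconnected_sUnion (corner c)
            · rintro _ ⟨i, hi, rfl⟩; exact corner_mem_face c i
            · rintro _ ⟨i, hi, rfl⟩; exact isPreconnected_face c i
          exact hp.eqOn_of_comp_eqOn hpc (hgco.mono Set.inter_subset_left)
            (hgcc.mono Set.inter_subset_right)
            (fun y hy => (hgl hy.1).trans (hgcl hy.2).symm)
            ⟨hvK, corner_mem_cell c⟩ hgcv.symm
        refine ⟨fun y => if y ∈ Kset m Nn j then g y else gc y, ?_, ?_, ?_⟩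
        · rw [hK1]
          exact myGlue (isClosed_Kset j) (isClosed_cell c) hgco hgcc heq
        · intro y hy
          rw [hK1] at hy
          by_cases hyK : y ∈ Kset m Nn j
          · show p (if y ∈ Kset m Nn j then g y else gc y) = f y
            rw [if_pos hyK]; exact hgl hyK
          · show p (if y ∈ Kset m Nn j then g y else gc y) = f y
            rw [if_neg hyK]; exact hgcl (hy.resolve_left hyK)
        · show (if (0 : Fin m → I) ∈ Kset m Nn j then g 0 else gc 0) = e
          rw [if_pos h0K]; exact hg0
    · have hKK : Kset m Nn (j + 1) = Kset m Nn j := by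
        ext y
        simp only [Kset, Set.mem_iUnion]
        constructor
        · rintro ⟨c, hc, hyc⟩
          exact ⟨c, by have hne : w c ≠ j := fun h => hex ⟨c, h⟩; omega, hyc⟩
        · rintro ⟨c, hc, hyc⟩
          exact ⟨c, by omega, hyc⟩
      rw [hKK]
      exact ⟨g, hgco, hgl, hg0⟩

theorem exists_cube_lift (hp : IsCoveringMap p) {m : ℕ} (f : C((Fin m → I), X)) {e : E}
    (he : p e = f 0) : ∃ g : C((Fin m → I), E), (∀ y, p (g y) = f y) ∧ g 0 = e := by
  have hcov : (Set.univ : Set (Fin m → I)) ⊆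
      ⋃ x : X, f ⁻¹' (hp x).2.choose := fun y _ =>
    Set.mem_iUnion.2 ⟨f y, (hp (f y)).2.choose_spec.1⟩
  obtain ⟨δ, hδ, hball⟩ := lebesgue_number_lemma_of_metric isCompact_univ
    (fun x => (hp x).2.choose_spec.2.1.preimage f.continuous) hcov
  obtain ⟨Nn, hNn⟩ := exists_nat_one_div_lt hδ
  have hsub : ∀ c : Fin m → Fin (Nn + 1),
      ∃ x : X, Set.MapsTo f (cell c) (hp x).2.choose := by
    intro c
    obtain ⟨x, hx⟩ := hball (corner c) trivial
    exact ⟨x, fun y hy => hx (cell_subset_ball hNn c hy)⟩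
  obtain ⟨g, hgco, hgl, hg0⟩ := exists_lift_on_Kset hp f he hsub ((Nn + 1) ^ m)
  have huniv : Kset m Nn ((Nn + 1) ^ m) = Set.univ := by
    apply Set.eq_univ_of_forall
    intro y
    obtain ⟨c, hc⟩ := exists_mem_cell y
    exact Set.mem_iUnion.2 ⟨c, Set.mem_iUnion.2 ⟨w_lt c, hc⟩⟩
  rw [huniv] at hgco hgl
  exact ⟨⟨g, continuousOn_univ.1 hgco⟩, fun y => hgl (Set.mem_univ y), hg0⟩

end CubeLift

open scoped Topology Topology.Homotopy unitInterval


namespace CubeLift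

/-- a face of the boundary of the cube -/
def bface (m : ℕ) (i : Fin m) (ε : I) : Set (Fin m → I) := {y | y i = ε}

lemma isPreconnected_bface (m : ℕ) (i : Fin m) (ε : I) : IsPreconnected (bface m i ε) := by
  have hcont : Continuous (fun y : Fin m → I => Function.update y i ε) := by
    apply continuous_pi
    intro j
    rcases eq_or_ne j i with rfl | h
    · simp only [Function.update_self]; exact continuous_const
    · simp only [Function.update_of_ne h]; exact continuous_apply j
  have himg : (fun y : Fin m → I => Function.update y i ε) '' Set.univ = bface m i ε := by
    apply Set.Subset.antisymm
    · rintro _ ⟨y, -, rfl⟩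
      exact Function.update_self i ε y
    · intro y hy
      refine ⟨y, trivial, ?_⟩
      show Function.update y i ε = y
      rw [← hy]
      exact Function.update_eq_self i y
  rw [← himg]
  exact isPreconnected_univ.image _ hcont.continuousOn

lemma zero_mem_bface_zero (m : ℕ) (i : Fin m) : (0 : Fin m → I) ∈ bface m i 0 := rfl

lemma isPreconnected_boundary (n : ℕ) : IsPreconnected (Cube.boundary (Fin (n + 2))) := by
  set m := n + 2
  -- A = union of all bottom faces
  set A : Set (Fin m → I) := ⋃ i : Fin m, bface m i 0 with hA
  have hApre : IsPreconnected A := by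
    rw [hA, ← Set.sUnion_range]
    apply isPreconnected_sUnion (0 : Fin m → I)
    · rintro _ ⟨i, rfl⟩; exact zero_mem_bface_zero m i
    · rintro _ ⟨i, rfl⟩; exact isPreconnected_bface m i 0
  have h0A : (0 : Fin m → I) ∈ A := Set.mem_iUnion.2 ⟨0, zero_mem_bface_zero m 0⟩
  -- B i = top face i together with A
  set B : Fin m → Set (Fin m → I) := fun i => bface m i 1 ∪ A with hB
  have hBpre : ∀ i, IsPreconnected (B i) := by
    intro i
    have : ∃ j : Fin m, j ≠ i := by
      rcases eq_or_ne i 0 with rfl | h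
      · exact ⟨1, by simp [Fin.ext_iff, m]⟩
      · exact ⟨0, Ne.symm h⟩
    obtain ⟨j, hj⟩ := this
    set q : Fin m → I := Function.update (0 : Fin m → I) i 1 with hq
    have hq1 : q ∈ bface m i 1 := Function.update_self i 1 0
    have hqA : q ∈ A := Set.mem_iUnion.2 ⟨j, show q j = 0 by
      rw [hq, Function.update_of_ne hj]; rfl⟩
    exact (isPreconnected_bface m i 1).union q hq1 hqA hApre
  have hcover : Cube.boundary (Fin m) = ⋃ i : Fin m, B i := by
    ext y
    simp only [Cube.boundary, Set.mem_setOf_eq, Set.mem_iUnion, hB, Set.mem_union, hA,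
      Set.mem_iUnion]
    constructor
    · rintro ⟨i, h0 | h1⟩
      · exact ⟨i, Or.inr ⟨i, h0⟩⟩
      · exact ⟨i, Or.inl h1⟩
    · rintro ⟨i, h1 | ⟨j, h0⟩⟩
      · exact ⟨i, Or.inr h1⟩
      · exact ⟨j, Or.inl h0⟩
  rw [hcover, ← Set.sUnion_range]
  apply isPreconnected_sUnion (0 : Fin m → I)
  · rintro _ ⟨i, rfl⟩; exact Or.inr h0A
  · rintro _ ⟨i, rfl⟩; exact hBpre i

/-- homeomorphism splitting off the first coordinate of a cube -/
noncomputable def cubeSucc (m : ℕ) : (Fin (m + 1) → I) ≃ₜ I × (Fin m → I) where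
  toFun y := (y 0, fun i => y i.succ)
  invFun z := Fin.cons z.1 z.2
  left_inv y := by
    funext j
    refine Fin.cases ?_ (fun i => ?_) j
    · simp
    · simp
  right_inv z := by
    refine Prod.ext ?_ ?_
    · simp
    · funext i; simp
  continuous_toFun := by
    exact (continuous_apply 0).prodMk (continuous_pi fun i => continuous_apply _)
  continuous_invFun := by
    apply continuous_pi
    intro j
    refine Fin.cases ?_ (fun i => ?_) j
    · simp only [Fin.cons_zero]
      exact continuous_fst
    · simp only [Fin.cons_succ]
      exact (continuous_apply i).comp continuous_snd

lemma cubeSucc_zero (m : ℕ) : cubeSucc m (0 : Fin (m + 1) → I) = (0, 0) := rfl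

lemma cubeSucc_symm_zero (m : ℕ) : (cubeSucc m).symm ((0 : I), (0 : Fin m → I)) = 0 := by
  rw [← cubeSucc_zero m, Homeomorph.symm_apply_apply]

end CubeLift



open CubeLift GenLoop

/-- A covering map induces an isomorphism on all homotopy groups `πₙ` for `n ≥ 2`
(here an arbitrary `n ≥ 2` is written as `n + 2`): the induced map is a bijective group
homomorphism. -/
theorem coveringMap_homotopyGroup_iso {E X : Type u}
    [TopologicalSpace E] [TopologicalSpace X]
    {p : E → X} (hp : IsCoveringMap p) (e₀ : E) (n : ℕ) :
    Function.Bijective (homotopyGroupMap (Fin (n + 2)) ⟨p, hp.continuous⟩ e₀) ∧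
      ∀ a b : HomotopyGroup (Fin (n + 2)) E e₀,
        homotopyGroupMap (Fin (n + 2)) ⟨p, hp.continuous⟩ e₀ (a * b) =
          homotopyGroupMap (Fin (n + 2)) ⟨p, hp.continuous⟩ e₀ a *
            homotopyGroupMap (Fin (n + 2)) ⟨p, hp.continuous⟩ e₀ b := by
  set m := n + 2 with hm
  set pc : C(E, X) := ⟨p, hp.continuous⟩ with hpc
  have h0bd : (0 : Fin m → I) ∈ Cube.boundary (Fin m) := ⟨0, Or.inl rfl⟩
  -- the underlying map on GenLoops
  set fmap : (Ω^ (Fin m) E e₀) → (Ω^ (Fin m) X (pc e₀)) :=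
    fun γ => ⟨pc.comp γ.1, fun y hy => congrArg pc (γ.2 y hy)⟩ with hfmap
  refine ⟨⟨?_, ?_⟩, ?_⟩
  · -- injectivity
    intro a b
    refine Quotient.inductionOn₂ a b fun γ₀ γ₁ hab => ?_
    have h01 : Homotopic (fmap γ₀) (fmap γ₁) := Quotient.exact hab
    obtain ⟨H⟩ := h01
    -- H : HomotopyRel (pc.comp γ₀.1) (pc.comp γ₁.1) boundary
    set F : C((Fin (m + 1) → I), X) :=
      H.toContinuousMap.comp ⟨_, (cubeSucc m).continuous⟩ with hF
    have hγ₀0 : γ₀ 0 = e₀ := γ₀.2 0 h0bd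
    have hγ₁0 : γ₁ 0 = e₀ := γ₁.2 0 h0bd
    have heF : p e₀ = F 0 := by
      show p e₀ = H (cubeSucc m 0)
      rw [cubeSucc_zero, H.apply_zero]
      show p e₀ = pc (γ₀ 0)
      rw [hγ₀0]; rfl
    obtain ⟨G, hG, hG0⟩ := exists_cube_lift hp F heF
    set G' : I × (Fin m → I) → E := fun z => G ((cubeSucc m).symm z) with hG'
    have hG'cont : Continuous G' := G.continuous.comp (cubeSucc m).symm.continuous
    have hpG' : ∀ z, p (G' z) = H z := by
      intro z
      rw [hG']
      show p (G ((cubeSucc m).symm z)) = H z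
      rw [hG ((cubeSucc m).symm z)]
      show H (cubeSucc m ((cubeSucc m).symm z)) = H z
      rw [Homeomorph.apply_symm_apply]
    have hG'00 : G' ((0 : I), (0 : Fin m → I)) = e₀ := by
      rw [hG']; show G ((cubeSucc m).symm (0, 0)) = e₀
      rw [cubeSucc_symm_zero]; exact hG0
    -- slice at 0 is γ₀
    have hslice0 : ∀ y, G' (0, y) = γ₀ y := by
      have heqf : (fun y => G' (0, y)) = fun y => γ₀ y := by
        refine hp.eq_of_comp_eq ?_ ?_ ?_ 0 ?_
        · exact hG'cont.comp (Continuous.prodMk_right 0)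
        · exact γ₀.1.continuous
        · funext y
          show p (G' (0, y)) = p (γ₀ y)
          rw [hpG', H.apply_zero]; rfl
        · show G' (0, 0) = γ₀ 0
          rw [hG'00, hγ₀0]
      exact fun y => congrFun heqf y
    -- G' is constant e₀ on I × boundary
    have hbdry : ∀ t : I, ∀ y ∈ Cube.boundary (Fin m), G' (t, y) = e₀ := by
      intro t y hy
      have hS : IsPreconnected ((Set.univ : Set I) ×ˢ Cube.boundary (Fin m)) :=
        isPreconnected_univ.prod (isPreconnected_boundary n)
      have hco : ∀ a ∈ (Set.univ : Set I) ×ˢ Cube.boundary (Fin m),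
          ∀ a' ∈ (Set.univ : Set I) ×ˢ Cube.boundary (Fin m), p (G' a) = p (G' a') := by
        rintro ⟨t₁, y₁⟩ ⟨-, hy₁⟩ ⟨t₂, y₂⟩ ⟨-, hy₂⟩
        rw [hpG', hpG']
        show H (t₁, y₁) = H (t₂, y₂)
        rw [H.eq_fst t₁ hy₁, H.eq_fst t₂ hy₂]
        exact congrArg pc ((γ₀.2 y₁ hy₁).trans (γ₀.2 y₂ hy₂).symm)
      have := hp.constOn_of_comp hS hG'cont.continuousOn hco
        (a := (t, y)) (a' := ((0 : I), (0 : Fin m → I)))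
        ⟨trivial, hy⟩ ⟨trivial, h0bd⟩
      rw [this, hG'00]
    -- slice at 1 is γ₁
    have hslice1 : ∀ y, G' (1, y) = γ₁ y := by
      have heqf : (fun y => G' (1, y)) = fun y => γ₁ y := by
        refine hp.eq_of_comp_eq ?_ ?_ ?_ 0 ?_
        · exact hG'cont.comp (Continuous.prodMk_right 1)
        · exact γ₁.1.continuous
        · funext y
          show p (G' (1, y)) = p (γ₁ y)
          rw [hpG', H.apply_one]; rfl
        · show G' (1, 0) = γ₁ 0
          rw [hbdry 1 0 h0bd, hγ₁0]
      exact fun y => congrFun heqf y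
    -- conclude
    apply Quotient.sound
    refine ⟨⟨⟨⟨fun z => G' z, hG'cont⟩, fun y => hslice0 y, fun y => hslice1 y⟩, ?_⟩⟩
    intro t y hy
    show G' (t, y) = γ₀ y
    rw [hbdry t y hy]
    exact (γ₀.2 y hy).symm
  · -- surjectivity
    intro b
    refine Quotient.inductionOn b fun γ => ?_
    have hγ0 : γ 0 = pc e₀ := γ.2 0 h0bd
    have heγ : p e₀ = γ.1 0 := hγ0.symm
    obtain ⟨G, hG, hG0⟩ := exists_cube_lift hp γ.1 heγ
    have hbd : ∀ y ∈ Cube.boundary (Fin m), G y = e₀ := by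
      intro y hy
      have hco : ∀ a ∈ Cube.boundary (Fin m), ∀ a' ∈ Cube.boundary (Fin m),
          p (G a) = p (G a') := by
        intro a ha a' ha'
        rw [hG, hG]
        exact (γ.2 a ha).trans (γ.2 a' ha').symm
      have := hp.constOn_of_comp (isPreconnected_boundary n) G.continuous.continuousOn
        hco hy h0bd
      rw [this, hG0]
    refine ⟨⟦⟨G, hbd⟩⟧, ?_⟩
    show Quotient.map _ _ ⟦(⟨G, hbd⟩ : Ω^ (Fin m) E e₀)⟧ = ⟦γ⟧
    change (⟦fmap ⟨G, hbd⟩⟧ : HomotopyGroup (Fin m) X (pc e₀)) = ⟦γ⟧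
    congr 1
    exact Subtype.ext (ContinuousMap.ext fun y => hG y)
  · -- multiplicativity
    intro a b
    refine Quotient.inductionOn₂ a b fun u v => ?_
    have hmul₁ := @HomotopyGroup.mul_spec (Fin m) E _ e₀ _ _ 0 u v
    have hmul₂ := @HomotopyGroup.mul_spec (Fin m) X _ (pc e₀) _ _ 0 (fmap u) (fmap v)
    beta_reduce at hmul₁ hmul₂
    rw [hmul₁]
    show Quotient.map _ _ ⟦transAt 0 v u⟧ =
      homotopyGroupMap (Fin m) pc e₀ ⟦u⟧ * homotopyGroupMap (Fin m) pc e₀ ⟦v⟧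
    change (⟦fmap (transAt 0 v u)⟧ : HomotopyGroup (Fin m) X (pc e₀)) = _
    show _ = homotopyGroupMap (Fin m) pc e₀ ⟦u⟧ * homotopyGroupMap (Fin m) pc e₀ ⟦v⟧
    have hmapu : homotopyGroupMap (Fin m) pc e₀ ⟦u⟧ = ⟦fmap u⟧ := rfl
    have hmapv : homotopyGroupMap (Fin m) pc e₀ ⟦v⟧ = ⟦fmap v⟧ := rfl
    rw [hmapu, hmapv, hmul₂]
    congr 1
    refine Subtype.ext (ContinuousMap.ext fun y => ?_)
    show pc (transAt 0 v u y) = transAt 0 (fmap v) (fmap u) y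
    simp only [transAt, coe_copy]
    split_ifs <;> rfl
end

section
/- Let X be a topological space with basepoint x₀ such that πₙ(X, x₀) is trivial for every n ≥ 2, and let p : E → X be a covering map with E simply connected and e₀ ∈ E with p(e₀) = x₀. Then E is weakly contractible: πₙ(E, e₀) is trivial for every n ≥ 1. -/
universe u

open scoped unitInterval Topology Topology.Homotopy
open Set

noncomputable section

namespace WeaklyContractibleAux

variable {A E X : Type*} [TopologicalSpace A] [TopologicalSpace E] [TopologicalSpace X]
  {p : E → X}

/-- Gluing continuity over a union of two time intervals. -/
lemma glue_continuousOn {B : Type*} [TopologicalSpace B] {f g : I × A → B}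
    {N : Set A} {r r' : I} (hrr' : r ≤ r')
    (hf : ContinuousOn f (Icc 0 r ×ˢ N)) (hg : ContinuousOn g (Icc r r' ×ˢ N))
    (heq : ∀ a ∈ N, f (r, a) = g (r, a)) :
    ContinuousOn (fun z => if z.1 ≤ r then f z else g z) (Icc 0 r' ×ˢ N) := by
  have hsplit : (Icc 0 r' ×ˢ N : Set (I × A)) = (Icc 0 r ×ˢ N) ∪ (Icc r r' ×ˢ N) := by
    rw [← union_prod, Icc_union_Icc_eq_Icc (by exact unitInterval.nonneg') hrr']
  intro z hz
  rw [hsplit] at hz ⊢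
  set h : I × A → B := fun z => if z.1 ≤ r then f z else g z with hh
  have hfh : EqOn h f (Icc 0 r ×ˢ N) := fun w hw => if_pos hw.1.2
  have hgh : EqOn h g (Icc r r' ×ˢ N) := by
    intro w hw
    by_cases hle : w.1 ≤ r
    · have hw1 : w.1 = r := le_antisymm hle hw.1.1
      have hw2 : w = (r, w.2) := Prod.ext hw1 rfl
      show (if w.1 ≤ r then f w else g w) = g w
      rw [if_pos hle, hw2, heq w.2 hw.2]
    · exact if_neg hle
  apply ContinuousWithinAt.union
  · by_cases hcl : z ∈ closure ((Icc 0 r : Set I) ×ˢ N)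
    · have hz1 : z.1 ≤ r := by
        have hsub : closure ((Icc 0 r : Set I) ×ˢ N)
            ⊆ closure (Icc 0 r : Set I) ×ˢ closure N := by
          rw [closure_prod_eq]
        have := (hsub hcl).1
        rw [isClosed_Icc.closure_eq] at this
        exact this.2
      have hzm : z ∈ (Icc 0 r : Set I) ×ˢ N :=
        ⟨⟨unitInterval.nonneg', hz1⟩, by rcases hz with h' | h' <;> exact h'.2⟩
      exact (hf.continuousWithinAt hzm).congr hfh (hfh hzm)
    · exact continuousWithinAt_of_notMem_closure hcl
  · by_cases hcl : z ∈ closure ((Icc r r' : Set I) ×ˢ N)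
    · have hz1 : r ≤ z.1 := by
        have hsub : closure ((Icc r r' : Set I) ×ˢ N)
            ⊆ closure (Icc r r' : Set I) ×ˢ closure N := by
          rw [closure_prod_eq]
        have := (hsub hcl).1
        rw [isClosed_Icc.closure_eq] at this
        exact this.1
      have hzm : z ∈ (Icc r r' : Set I) ×ˢ N := by
        refine ⟨⟨hz1, ?_⟩, by rcases hz with h' | h' <;> exact h'.2⟩
        rcases hz with h' | h'
        · exact le_trans h'.1.2 hrr'
        · exact h'.1.2
      exact (hg.continuousWithinAt hzm).congr hgh (hgh hzm)
    · exact continuousWithinAt_of_notMem_closure hcl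

/-- Local existence of lifts of a homotopy along a covering map. -/
lemma exists_local_lift (hp : IsCoveringMap p) (H : C(I × A, X)) {f : A → E}
    (hf : Continuous f) (h0 : ∀ a, p (f a) = H (0, a)) (a₀ : A) :
    ∃ N ∈ 𝓝 a₀, ∃ G : I × A → E, ContinuousOn G (univ ×ˢ N) ∧
      (∀ z ∈ (univ ×ˢ N : Set (I × A)), p (G z) = H z) ∧ ∀ a ∈ N, G (0, a) = f a := by
  classical
  have hne : ∀ t : I, Nonempty (p ⁻¹' {H (t, a₀)}) := fun t => by
    obtain ⟨Γ, hΓ, -⟩ := hp.exists_path_lifts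
      (H.comp ⟨fun s : I => (s, a₀), by fun_prop⟩) (f a₀) (h0 a₀).symm
    exact ⟨⟨Γ t, congr_fun hΓ t⟩⟩
  set c : I → Set I :=
    fun t => {s | H (s, a₀) ∈ ((hp (H (t, a₀))).toTrivialization).baseSet} with hc
  have hc₁ : ∀ t, IsOpen (c t) := fun t =>
    ((hp (H (t, a₀))).toTrivialization.open_baseSet).preimage
      (H.continuous.comp (continuous_id.prodMk continuous_const))
  have hc₂ : (univ : Set I) ⊆ ⋃ t, c t := fun t _ =>
    mem_iUnion.mpr ⟨t, (hp (H (t, a₀))).mem_toTrivialization_baseSet⟩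
  obtain ⟨s, hs0, hmono, ⟨m, hm⟩, hsub⟩ :=
    exists_monotone_Icc_subset_open_cover_unitInterval hc₁ hc₂
  choose idx hidx using hsub
  have tube : ∀ n : ℕ, ∃ V : Set A, IsOpen V ∧ a₀ ∈ V ∧
      ∀ t ∈ Icc (s n) (s (n + 1)), ∀ a ∈ V,
        H (t, a) ∈ ((hp (H (idx n, a₀))).toTrivialization).baseSet := by
    intro n
    have hopen : IsOpen (H ⁻¹' ((hp (H (idx n, a₀))).toTrivialization).baseSet) :=
      ((hp (H (idx n, a₀))).toTrivialization.open_baseSet).preimage H.continuous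
    have hsubn : (Icc (s n) (s (n + 1)) ×ˢ ({a₀} : Set A)) ⊆
        H ⁻¹' ((hp (H (idx n, a₀))).toTrivialization).baseSet := by
      rintro ⟨t, a⟩ ⟨ht, ha⟩
      rcases mem_singleton_iff.mp ha with rfl
      exact hidx n ht
    obtain ⟨u, v, hu, hv, hku, hav, huv⟩ :=
      generalized_tube_lemma (isClosed_Icc.isCompact) isCompact_singleton hopen hsubn
    exact ⟨v, hv, hav rfl, fun t ht a ha => huv ⟨hku ht, ha⟩⟩
  choose V hVopen hVmem hVsub using tube
  set N := ⋂ n ∈ Finset.range (m + 1), V n with hN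
  have hNopen : IsOpen N := isOpen_biInter_finset fun n _ => hVopen n
  have hNmem : a₀ ∈ N := mem_iInter₂.mpr fun n _ => hVmem n
  have hNV : ∀ k, k ≤ m → N ⊆ V k := fun k hk =>
    biInter_subset_of_mem (Finset.mem_range.mpr (Nat.lt_succ_of_le hk))
  have main : ∀ k, k ≤ m → ∃ G : I × A → E, ContinuousOn G (Icc 0 (s k) ×ˢ N) ∧
      (∀ z ∈ (Icc 0 (s k) ×ˢ N : Set (I × A)), p (G z) = H z) ∧
      ∀ a ∈ N, G (0, a) = f a := by
    intro k
    induction k with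
    | zero =>
      intro _
      refine ⟨fun z => f z.2, (hf.comp continuous_snd).continuousOn, ?_, fun a _ => rfl⟩
      rintro ⟨t, a⟩ ⟨ht, -⟩
      have ht0 : t = 0 := le_antisymm (hs0 ▸ ht.2) unitInterval.nonneg'
      rw [ht0]
      exact h0 a
    | succ k ih =>
      intro hk
      obtain ⟨G, hGc, hGp, hG0⟩ := ih (Nat.le_of_succ_le hk)
      set Tk := (hp (H (idx k, a₀))).toTrivialization with hTk
      have hbase : ∀ t ∈ Icc (s k) (s (k + 1)), ∀ a ∈ N, H (t, a) ∈ Tk.baseSet :=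
        fun t ht a ha => hVsub k t ht a (hNV k (Nat.le_of_succ_le hk) ha)
      have hsk1 : s k ∈ Icc (s k) (s (k + 1)) := ⟨le_rfl, hmono (Nat.le_succ k)⟩
      have hskmem : s k ∈ Icc (0 : I) (s k) := ⟨unitInterval.nonneg', le_rfl⟩
      have hGsk : ∀ a ∈ N, p (G (s k, a)) = H (s k, a) :=
        fun a ha => hGp (s k, a) ⟨hskmem, ha⟩
      have hsource : ∀ a ∈ N, G (s k, a) ∈ Tk.source := fun a ha =>
        Tk.mem_source.mpr (by rw [hGsk a ha]; exact hbase _ hsk1 a ha)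
      set Φ : I × A → E :=
        fun z => Tk.toPartialHomeomorph.symm (H z, (Tk (G (s k, z.2))).2) with hΦ
      have hslice : ContinuousOn (fun a => G (s k, a)) N := by
        have hmap : ∀ a ∈ N, ((s k : I), a) ∈ (Icc (0 : I) (s k) ×ˢ N : Set (I × A)) :=
          fun a ha => ⟨hskmem, ha⟩
        exact hGc.comp ((continuous_const.prodMk continuous_id).continuousOn) hmap
      have hTslice : ContinuousOn (fun a => (Tk (G (s k, a))).2) N :=
        continuous_snd.comp_continuousOn
          (Tk.continuousOn_toFun.comp hslice fun a ha => hsource a ha)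
      have hinner : ContinuousOn (fun z : I × A => (H z, (Tk (G (s k, z.2))).2))
          (Icc (s k) (s (k + 1)) ×ˢ N) := by
        refine ContinuousOn.prodMk H.continuous.continuousOn ?_
        exact hTslice.comp continuous_snd.continuousOn fun z hz => hz.2
      have hΦc : ContinuousOn Φ (Icc (s k) (s (k + 1)) ×ˢ N) := by
        refine Tk.toPartialHomeomorph.continuousOn_symm.comp hinner ?_
        intro z hz
        rw [Tk.target_eq]
        exact ⟨hbase z.1 hz.1 z.2 hz.2, mem_univ _⟩
      have hΦeq : ∀ a ∈ N, G (s k, a) = Φ (s k, a) := by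
        intro a ha
        show G (s k, a) = Tk.toPartialHomeomorph.symm (H (s k, a), (Tk (G (s k, a))).2)
        rw [← hGsk a ha]
        exact (Tk.symm_apply_mk_proj (hsource a ha)).symm
      refine ⟨fun z => if z.1 ≤ s k then G z else Φ z,
        glue_continuousOn (hmono (Nat.le_succ k)) hGc hΦc hΦeq, ?_, ?_⟩
      · rintro ⟨t, a⟩ ⟨ht, ha⟩
        by_cases hle : t ≤ s k
        · simp only [if_pos hle]
          exact hGp (t, a) ⟨⟨ht.1, hle⟩, ha⟩
        · simp only [if_neg hle]
          have htk : t ∈ Icc (s k) (s (k + 1)) := ⟨(not_le.mp hle).le, ht.2⟩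
          exact Tk.proj_symm_apply (Tk.mem_target.mpr (hbase t htk a ha))
      · intro a ha
        have h0le : (0 : I) ≤ s k := unitInterval.nonneg'
        simp only [if_pos h0le]
        exact hG0 a ha
  obtain ⟨G, hGc, hGp, hG0⟩ := main m le_rfl
  have hIcc : Icc (0 : I) (s m) = univ := by
    rw [hm m le_rfl]
    exact eq_univ_of_forall fun t => ⟨unitInterval.nonneg', unitInterval.le_one'⟩
  rw [hIcc] at hGc hGp
  exact ⟨N, hNopen.mem_nhds hNmem, G, hGc, hGp, hG0⟩

/-- The homotopy lifting property for covering maps. -/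
theorem exists_lift_homotopy (hp : IsCoveringMap p) (H : C(I × A, X)) {f : A → E}
    (hf : Continuous f) (h0 : ∀ a, p (f a) = H (0, a)) :
    ∃ G : C(I × A, E), (∀ z, p (G z) = H z) ∧ ∀ a, G (0, a) = f a := by
  choose Nset hNmem Gl hGc hGp hG0 using exists_local_lift hp H hf h0
  set G : I × A → E := fun z => Gl z.2 z with hG
  have key : ∀ (a b b' : A), a ∈ Nset b → a ∈ Nset b' → ∀ t : I,
      Gl b (t, a) = Gl b' (t, a) := by
    intro a b b' hb hb'
    have c1 : Continuous fun t : I => Gl b (t, a) :=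
      (hGc b).comp_continuous (continuous_id.prodMk continuous_const)
        fun t => ⟨mem_univ _, hb⟩
    have c2 : Continuous fun t : I => Gl b' (t, a) :=
      (hGc b').comp_continuous (continuous_id.prodMk continuous_const)
        fun t => ⟨mem_univ _, hb'⟩
    have hcomp : p ∘ (fun t : I => Gl b (t, a)) = p ∘ fun t : I => Gl b' (t, a) := by
      funext t
      show p (Gl b (t, a)) = p (Gl b' (t, a))
      rw [hGp b (t, a) ⟨mem_univ _, hb⟩, hGp b' (t, a) ⟨mem_univ _, hb'⟩]
    have h00 : Gl b (0, a) = Gl b' (0, a) := by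
      rw [hG0 b a hb, hG0 b' a hb']
    exact fun t => congr_fun (hp.eq_of_comp_eq c1 c2 hcomp 0 h00) t
  have hGcont : Continuous G := by
    rw [continuous_iff_continuousAt]
    intro z
    have hmem : (univ ×ˢ Nset z.2 : Set (I × A)) ∈ 𝓝 z :=
      prod_mem_nhds Filter.univ_mem (hNmem z.2)
    have heq : ∀ w ∈ (univ ×ˢ Nset z.2 : Set (I × A)), Gl z.2 w = G w := fun w hw =>
      (key w.2 w.2 z.2 (mem_of_mem_nhds (hNmem w.2)) hw.2 w.1).symm
    exact ContinuousAt.congr ((hGc z.2).continuousAt hmem)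
      (Filter.eventuallyEq_of_mem hmem heq)
  refine ⟨⟨G, hGcont⟩, fun z => ?_, fun a => ?_⟩
  · exact hGp z.2 z ⟨mem_univ _, mem_of_mem_nhds (hNmem z.2)⟩
  · exact hG0 a a (mem_of_mem_nhds (hNmem a))

end WeaklyContractibleAux

end

open WeaklyContractibleAux Set

/-- If all homotopy groups `πₙ(X, x₀)` for `n ≥ 2` are trivial and `p : E → X` is a covering
map with `E` simply connected,
then `E` is weakly contractible: all homotopy groups
`πₙ(E, e₀)` for `n ≥ 1` are trivial. -/
theorem weakly_contractible_of_covering {E X : Type u}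
    [TopologicalSpace E] [TopologicalSpace X]
    (x₀ : X) (hX : ∀ n : ℕ, 2 ≤ n → Subsingleton (HomotopyGroup (Fin n) X x₀))
    {p : E → X} (hp : IsCoveringMap p) [SimplyConnectedSpace E]
    (e₀ : E) (he : p e₀ = x₀) :
    ∀ n : ℕ, 1 ≤ n → Subsingleton (HomotopyGroup (Fin n) E e₀) := by
  intro n hn
  rcases eq_or_lt_of_le hn with h1 | h2
  · -- n = 1 : use simple connectivity
    obtain rfl : 1 = n := h1
    have hFG : Subsingleton (FundamentalGroup E e₀) := by
      constructor
      intro a b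
      apply CategoryTheory.End.ext
      exact @Subsingleton.elim (Path.Homotopic.Quotient e₀ e₀) inferInstance _ _
    exact Equiv.subsingleton (homotopyGroupEquivFundamentalGroupOfUnique (Fin 1))
  · -- n ≥ 2 : lift null-homotopies from X
    have h2' : 2 ≤ n := h2
    haveI := hX n h2'
    have hnull : ∀ f : GenLoop (Fin n) E e₀, GenLoop.Homotopic f GenLoop.const := by
      intro f
      have hbf : ∀ y ∈ Cube.boundary (Fin n),
          (ContinuousMap.comp ⟨p, hp.continuous⟩ f.1) y = x₀ := by
        intro y hy
        show p (f.1 y) = x₀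
        rw [f.2 y hy, he]
      set pf : GenLoop (Fin n) X x₀ := ⟨ContinuousMap.comp ⟨p, hp.continuous⟩ f.1, hbf⟩
        with hpfdef
      have hXeq : (⟦pf⟧ : HomotopyGroup (Fin n) X x₀) = ⟦GenLoop.const⟧ :=
        @Subsingleton.elim _ (hX n h2') _ _
      obtain ⟨Hty⟩ : GenLoop.Homotopic pf GenLoop.const := Quotient.exact hXeq
      obtain ⟨G, hGp, hG0⟩ := exists_lift_homotopy hp Hty.toContinuousMap
        (f := fun y => f.1 y) f.1.continuous (fun y => by
          have : Hty.toContinuousMap (0, y) = pf.1 y := Hty.apply_zero y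
          rw [this]
          rfl)
      -- the set on which the lift is forced to be constant
      have hFn : (0 : ℕ) < n := by omega
      set y₀ : Fin n → I := fun _ => 0 with hy₀def
      have hy₀ : y₀ ∈ Cube.boundary (Fin n) := ⟨⟨0, hFn⟩, Or.inl rfl⟩
      set S : Set (I × (Fin n → I)) :=
        (univ ×ˢ Cube.boundary (Fin n)) ∪ (({1} : Set I) ×ˢ univ) with hSdef
      have hpre : IsPreconnected S := by
        have hqeq : S = ⋃ (y : Cube.boundary (Fin n)),
            (((univ : Set I) ×ˢ {(y : Fin n → I)}) ∪ (({1} : Set I) ×ˢ univ)) := by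
          apply Subset.antisymm
          · rintro ⟨t, y⟩ (⟨-, hy⟩ | ⟨ht, -⟩)
            · exact mem_iUnion.mpr ⟨⟨y, hy⟩, Or.inl ⟨mem_univ _, rfl⟩⟩
            · exact mem_iUnion.mpr ⟨⟨y₀, hy₀⟩, Or.inr ⟨ht, mem_univ _⟩⟩
          · rintro z hz
            obtain ⟨y, hzy⟩ := mem_iUnion.mp hz
            rcases hzy with ⟨-, h⟩ | ⟨h, -⟩
            · exact Or.inl ⟨mem_univ _, by rw [mem_singleton_iff.mp h]; exact y.2⟩
            · exact Or.inr ⟨h, mem_univ _⟩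
        rw [hqeq]
        apply isPreconnected_iUnion
        · exact ⟨(1, y₀), mem_iInter.mpr fun y => Or.inr ⟨rfl, mem_univ _⟩⟩
        · intro y
          apply IsPreconnected.union (1, (y : Fin n → I))
          · exact ⟨mem_univ _, rfl⟩
          · exact ⟨rfl, mem_univ _⟩
          · exact isPreconnected_univ.prod isPreconnected_singleton
          · exact isPreconnected_singleton.prod isPreconnected_univ
      have hanchor : ((0 : I), y₀) ∈ S := Or.inl ⟨mem_univ _, hy₀⟩
      have hx : ∀ u ∈ S, p (G u) = x₀ := by
        rintro ⟨t, y⟩ (⟨-, hy⟩ | ⟨ht, -⟩)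
        · rw [hGp (t, y)]
          exact (Hty.eq_fst t hy).trans (hbf y hy)
        · have ht1 : t = 1 := ht
          subst ht1
          rw [hGp ((1 : I), y)]
          exact Hty.apply_one y
      have hconstS : ∀ z ∈ S, G z = e₀ := by
        intro z hz
        have hcz : G z = G ((0 : I), y₀) :=
          hp.constOn_of_comp hpre G.continuous.continuousOn
            (fun a ha a' ha' => (hx a ha).trans (hx a' ha').symm) hz hanchor
        rw [hcz, hG0 y₀]
        exact f.2 y₀ hy₀
      refine ⟨{ toContinuousMap := G,
                map_zero_left := fun y => hG0 y,
                map_one_left := fun y => hconstS (1, y) (Or.inr ⟨rfl, mem_univ _⟩),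
                prop' := fun t y hy => ?_ }⟩
      show G (t, y) = f.1 y
      rw [hconstS (t, y) (Or.inl ⟨mem_univ _, hy⟩)]
      exact (f.2 y hy).symm
    constructor
    intro F₁ F₂
    refine Quotient.inductionOn₂ F₁ F₂ fun f g => Quotient.sound ?_
    exact (hnull f).trans (hnull g).symm
end

section
/- Let X be a connected, locally path-connected topological space and p : E → X a covering map with E simply connected and locally path-connected. Let G be the deck transformation group of p, acting on E by h · e = h(e), and let E ⧸ G be the orbit space with the quotient topology. Then the map E ⧸ G → X induced by p (well-defined since p is constant on orbits) is a homeomorphism. -/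
universe u

/-- The group of self-homeomorphisms of a space, under composition
(`g * h` is "`h` first, then `g`"). -/
instance homeomorphGroup (E : Type u) [TopologicalSpace E] : Group (E ≃ₜ E) where
  one := Homeomorph.refl E
  mul g h := h.trans g
  inv := Homeomorph.symm
  mul_assoc _ _ _ := Homeomorph.ext fun _ => rfl
  one_mul _ := Homeomorph.ext fun _ => rfl
  mul_one _ := Homeomorph.ext fun _ => rfl
  inv_mul_cancel g := Homeomorph.ext g.symm_apply_apply

/-- The deck transformation group of `p : E → X`: the group of homeomorphisms `h` of `E`
satisfying `p ∘ h = p`. -/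
def deckGroup {E X : Type u} [TopologicalSpace E] [TopologicalSpace X] (p : E → X) :
    Subgroup (E ≃ₜ E) where
  carrier := {h | ∀ e, p (h e) = p e}
  mul_mem' := fun {g h} hg hh e => (hg (h e)).trans (hh e)
  one_mem' := fun _ => rfl
  inv_mem' := fun {g} hg e => (hg (g.symm e)).symm.trans (congrArg p (g.apply_symm_apply e))

/-- Deck transformations act on the total space by evaluation. -/
instance deckGroupMulAction {E X : Type u} [TopologicalSpace E] [TopologicalSpace X]
    (p : E → X) : MulAction (deckGroup p) E where
  smul h e := h.1 e
  one_smul _ := rfl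
  mul_smul _ _ _ := rfl


section CoveringLemmas


open unitInterval Set Topology

variable {E X : Type*} [TopologicalSpace E] [TopologicalSpace X] {p : E → X}

/-- Extension step for path lifting. -/
lemma lift_extend (γ : C(I, X)) (e₀ : E)
    {t m : I} (htm : t ≤ m) {F : Type*} [TopologicalSpace F] (T : Bundle.Trivialization F p)
    (hbase : ∀ u : I, t ≤ u → u ≤ m → γ u ∈ T.baseSet)
    (hΓ : ∃ Γ : C(I, E), Γ 0 = e₀ ∧ ∀ s ≤ t, p (Γ s) = γ s) :
    ∃ Γ : C(I, E), Γ 0 = e₀ ∧ ∀ s ≤ m, p (Γ s) = γ s := by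
  obtain ⟨Γ, h0, hle⟩ := hΓ
  have hΓt : Γ t ∈ T.source := T.mem_source.2 (by rw [hle t le_rfl]; exact hbase t le_rfl htm)
  set c : F := (T (Γ t)).2 with hc
  set clamp : I → I := fun u => min (max u t) m with hclamp
  have hclamp_mem : ∀ u, t ≤ clamp u ∧ clamp u ≤ m := fun u =>
    ⟨le_min (le_max_right u t) htm, min_le_right _ _⟩
  have hcont2 : Continuous fun u : I => T.toOpenPartialHomeomorph.symm (γ (clamp u), c) := by
    apply T.toOpenPartialHomeomorph.continuousOn_symm.comp_continuous
    · exact (γ.continuous.comp (((continuous_id.max continuous_const).min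
        continuous_const))).prodMk continuous_const
    · intro u
      exact T.mem_target.2 (hbase _ (hclamp_mem u).1 (hclamp_mem u).2)
  have hagree : ∀ u : I, (u : I) = t → Γ u = T.toOpenPartialHomeomorph.symm (γ (clamp u), c) := by
    intro u hu
    subst hu
    have : clamp u = u := by
      simp only [hclamp]
      rw [max_self]
      exact min_eq_left htm
    rw [this]
    have : γ u = p (Γ u) := (hle u le_rfl).symm
    rw [this, hc]
    exact (T.symm_apply_mk_proj hΓt).symm
  refine ⟨⟨fun u => if u ≤ t then Γ u else T.toOpenPartialHomeomorph.symm (γ (clamp u), c), ?_⟩,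
    ?_, ?_⟩
  · exact Continuous.if_le Γ.continuous hcont2 continuous_id continuous_const
      (fun u hu => hagree u hu)
  · show (if (0:I) ≤ t then Γ 0 else _) = e₀
    have h0t : (0:I) ≤ t := Subtype.coe_le_coe.1 (by simpa using t.2.1)
    rw [if_pos h0t]
    exact h0
  · intro s hs
    show p (if s ≤ t then Γ s else T.toOpenPartialHomeomorph.symm (γ (clamp s), c)) = γ s
    by_cases h : s ≤ t
    · rw [if_pos h]; exact hle s h
    · rw [if_neg h]
      push_neg at h
      have hcl : clamp s = s := by
        simp only [hclamp]
        rw [max_eq_left h.le, min_eq_left hs]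
      rw [T.proj_symm_apply (T.mem_target.2 (hbase _ (hclamp_mem s).1 (hclamp_mem s).2)), hcl]

/-- Path lifting for covering maps. -/
lemma IsCoveringMap.exists_path_lift (hp : IsCoveringMap p) (γ : C(I, X)) (e₀ : E)
    (he : p e₀ = γ 0) : ∃ Γ : C(I, E), Γ 0 = e₀ ∧ ∀ s, p (Γ s) = γ s := by
  obtain ⟨Γ, h1, h0⟩ := hp.exists_path_lifts γ e₀ he.symm
  exact ⟨Γ, h0, fun s => congrFun h1 s⟩
open Filter

/-- A continuous map from `I` to a discrete space is constant. -/
lemma discrete_const_I {Y : Type*} [TopologicalSpace Y] [DiscreteTopology Y] {g : I → Y}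
    (hg : Continuous g) (a b : I) : g a = g b :=
  ((IsLocallyConstant.iff_continuous g).2 hg).apply_eq_of_preconnectedSpace a b

lemma IsCoveringMap.lift_unique' (hp : IsCoveringMap p) {Γ₁ Γ₂ : I → E}
    (hc₁ : Continuous Γ₁) (hc₂ : Continuous Γ₂)
    (h : ∀ s, p (Γ₁ s) = p (Γ₂ s)) (h0 : Γ₁ 0 = Γ₂ 0) : Γ₁ = Γ₂ :=
  hp.eq_of_comp_eq hc₁ hc₂ (funext h) 0 h0

/-- The straight-line path in `I` from `a` to `b`. -/
noncomputable def segPath (a b : I) : I → I := fun τ =>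
  ⟨(1 - (τ:ℝ)) * a + τ * b, by
    constructor
    · nlinarith [τ.2.1, τ.2.2, a.2.1, b.2.1]
    · nlinarith [τ.2.1, τ.2.2, a.2.2, b.2.2]⟩

lemma segPath_continuous (a b : I) : Continuous (segPath a b) := by
  apply Continuous.subtype_mk
  fun_prop

lemma segPath_zero (a b : I) : segPath a b 0 = a := by
  simp [segPath]

lemma segPath_one (a b : I) : segPath a b 1 = b := by
  simp [segPath]

lemma segPath_dist (a b : I) (τ : I) : dist (segPath a b τ) a ≤ dist b a := by
  rw [Subtype.dist_eq, Subtype.dist_eq, Real.dist_eq, Real.dist_eq]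
  have h : ((segPath a b τ : I) : ℝ) - a = τ * ((b:ℝ) - a) := by
    simp only [segPath]
    ring
  rw [h, abs_mul, abs_of_nonneg τ.2.1]
  nlinarith [τ.2.2, abs_nonneg ((b:ℝ) - a)]

/-- Monodromy: lifts (starting at the same point) of the two end-paths of a homotopy
which is constant on both vertical edges have the same endpoint. -/
lemma IsCoveringMap.monodromy' (hp : IsCoveringMap p) (H : C(I × I, X)) (e₀ : E)
    (hleft : ∀ t, H (t, 0) = H (0, 0)) (hright : ∀ t, H (t, 1) = H (0, 1))
    (he : p e₀ = H (0, 0))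
    (Γ₀ Γ₁ : C(I, E)) (h₀0 : Γ₀ 0 = e₀) (h₁0 : Γ₁ 0 = e₀)
    (h₀ : ∀ s, p (Γ₀ s) = H (0, s)) (h₁ : ∀ s, p (Γ₁ s) = H (1, s)) :
    Γ₀ 1 = Γ₁ 1 := by
  -- choose lifts of all horizontal paths
  have hex : ∀ t : I, ∃ Γ : C(I, E), Γ 0 = e₀ ∧ ∀ s, p (Γ s) = H (t, s) := fun t =>
    hp.exists_path_lift (H.comp ((ContinuousMap.const I t).prodMk (ContinuousMap.id I))) e₀
      (by simp only [ContinuousMap.comp_apply, ContinuousMap.prod_eval,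
        ContinuousMap.const_apply, ContinuousMap.id_apply]; rw [hleft]; exact he)
  choose Γ hΓ0 hΓp using hex
  -- the endpoint map is locally constant
  have main : ∀ t₀ : I, ∀ᶠ t in nhds t₀, Γ t 1 = Γ t₀ 1 := by
    intro t₀
    haveI hne : ∀ s : I, Nonempty ↥(p ⁻¹' {H (t₀, s)}) := fun s => ⟨⟨Γ t₀ s, hΓp t₀ s⟩⟩
    set T : (s : I) → Bundle.Trivialization (↥(p ⁻¹' {H (t₀, s)})) p := fun s =>
      (hp (H (t₀, s))).toTrivialization with hTdef
    have hTmem : ∀ s, H (t₀, s) ∈ (T s).baseSet := fun s => by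
      rw [hTdef]; exact (hp (H (t₀, s))).mem_toTrivialization_baseSet
    haveI hTdisc : ∀ s : I, DiscreteTopology ↥(p ⁻¹' {H (t₀, s)}) := fun s => (hp (H (t₀, s))).1
    have hδex : ∀ s : I, ∃ δ > 0, Metric.ball t₀ δ ×ˢ Metric.ball s δ ⊆ H ⁻¹' (T s).baseSet := by
      intro s
      obtain ⟨δ, hδ0, hsub⟩ := Metric.isOpen_iff.1
        ((T s).open_baseSet.preimage H.continuous) (t₀, s) (by simpa using hTmem s)
      exact ⟨δ, hδ0, by rw [ball_prod_same]; exact hsub⟩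
    choose δ hδ0 hδsub using hδex
    obtain ⟨ι, hι⟩ := isCompact_univ.elim_finite_subcover (fun s : I => Metric.ball s (δ s))
      (fun s => Metric.isOpen_ball) (fun u _ => mem_iUnion.2 ⟨u, Metric.mem_ball_self (hδ0 u)⟩)
    have hιne : ι.Nonempty := by
      rcases Finset.eq_empty_or_nonempty ι with h | h
      · exfalso; have := hι (mem_univ 0); simp [h] at this
      · exact h
    set δm := ι.inf' hιne δ with hδmdef
    have hδm0 : 0 < δm := (Finset.lt_inf'_iff _).2 fun s _ => hδ0 s
    have hδmle : ∀ s ∈ ι, δm ≤ δ s := fun s hs => Finset.inf'_le _ hs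
    have hcov : ∀ u : I, ∃ s ∈ ι, u ∈ Metric.ball s (δ s) := by
      intro u; have := hι (mem_univ u); simpa using this
    have hbase : ∀ τ : I, dist τ t₀ < δm → ∀ s ∈ ι, ∀ u ∈ Metric.ball s (δ s),
        H (τ, u) ∈ (T s).baseSet := by
      intro τ hτ s hs u hu
      exact hδsub s (Set.mk_mem_prod (Metric.mem_ball.2 (lt_of_lt_of_le hτ (hδmle s hs))) hu)
    have hsrc : ∀ τ : I, dist τ t₀ < δm → ∀ s ∈ ι, ∀ u ∈ Metric.ball s (δ s),
        Γ τ u ∈ (T s).source := fun τ hτ s hs u hu =>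
      (T s).mem_source.2 (by rw [hΓp]; exact hbase τ hτ s hs u hu)
    have ht₀ : dist t₀ t₀ < δm := by simpa using hδm0
    have hsec : ∀ τ : I, dist τ t₀ < δm → ∀ s ∈ ι, ∀ u ∈ Metric.ball s (δ s),
        (T s).toOpenPartialHomeomorph.symm (H (τ, u), ((T s) (Γ τ u)).2) = Γ τ u := by
      intro τ hτ s hs u hu
      have := (T s).symm_apply_mk_proj (hsrc τ hτ s hs u hu)
      rwa [hΓp τ u] at this
    have final : ∀ t : I, dist t t₀ < δm → Γ t 1 = Γ t₀ 1 := by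
      intro t ht
      have htrans : ∀ u : I, ∀ s₁ ∈ ι, ∀ s₂ ∈ ι, u ∈ Metric.ball s₁ (δ s₁) →
          u ∈ Metric.ball s₂ (δ s₂) →
          ((T s₁) (Γ t u)).2 = ((T s₁) (Γ t₀ u)).2 →
          ((T s₂) (Γ t u)).2 = ((T s₂) (Γ t₀ u)).2 := by
        intro u s₁ hs₁ s₂ hs₂ hu₁ hu₂ heq
        set c := ((T s₁) (Γ t₀ u)).2 with hc
        have hsecd : ∀ τ : I, dist (segPath t₀ t τ) t₀ < δm := fun τ =>
          lt_of_le_of_lt (segPath_dist t₀ t τ) ht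
        set k : I → E := fun τ =>
          (T s₁).toOpenPartialHomeomorph.symm (H (segPath t₀ t τ, u), c) with hk
        have hkmem : ∀ τ, H (segPath t₀ t τ, u) ∈ (T s₁).baseSet := fun τ =>
          hbase _ (hsecd τ) s₁ hs₁ u hu₁
        have hkcont : Continuous k := by
          apply (T s₁).toOpenPartialHomeomorph.continuousOn_symm.comp_continuous
          · exact (H.continuous.comp
              ((segPath_continuous t₀ t).prodMk continuous_const)).prodMk continuous_const
          · exact fun τ => (T s₁).mem_target.2 (hkmem τ)
        have hkp : ∀ τ, p (k τ) = H (segPath t₀ t τ, u) := fun τ =>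
          (T s₁).proj_symm_apply ((T s₁).mem_target.2 (hkmem τ))
        have hksrc : ∀ τ, k τ ∈ (T s₂).source := fun τ =>
          (T s₂).mem_source.2 (by rw [hkp]; exact hbase _ (hsecd τ) s₂ hs₂ u hu₂)
        have hgcont : Continuous fun τ => ((T s₂) (k τ)).2 :=
          continuous_snd.comp
            (((T s₂).toOpenPartialHomeomorph.continuousOn.comp_continuous hkcont hksrc))
        have h01 := discrete_const_I hgcont 0 1
        have hk0 : k 0 = Γ t₀ u := by
          rw [hk]
          simp only [segPath_zero]
          rw [hc]
          exact hsec t₀ ht₀ s₁ hs₁ u hu₁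
        have hk1 : k 1 = Γ t u := by
          rw [hk]
          simp only [segPath_one]
          rw [← heq]
          exact hsec t ht s₁ hs₁ u hu₁
        rw [hk0, hk1] at h01
        exact h01.symm
      set A : Set I := {u | ∀ s ∈ ι, u ∈ Metric.ball s (δ s) →
        ((T s) (Γ t u)).2 = ((T s) (Γ t₀ u)).2} with hA
      have hsheafev : ∀ τ : I, dist τ t₀ < δm → ∀ s ∈ ι, ∀ u ∈ Metric.ball s (δ s),
          ∀ᶠ v in nhds u, ((T s) (Γ τ v)).2 = ((T s) (Γ τ u)).2 := by
        intro τ hτ s hs u hu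
        have hco : ContinuousOn (fun v => ((T s) (Γ τ v)).2) (Metric.ball s (δ s)) :=
          continuous_snd.comp_continuousOn
            (((T s).toOpenPartialHomeomorph.continuousOn).comp (Γ τ).continuous.continuousOn
              (fun v hv => hsrc τ hτ s hs v hv))
        have hca : ContinuousAt (fun v => ((T s) (Γ τ v)).2) u :=
          hco.continuousAt (Metric.isOpen_ball.mem_nhds hu)
        have := hca ((isOpen_discrete {((T s) (Γ τ u)).2}).mem_nhds rfl)
        filter_upwards [this] with v hv
        exact hv
      have hAopen : IsOpen A := by
        rw [isOpen_iff_eventually]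
        intro u hu
        obtain ⟨s, hs, hus⟩ := hcov u
        filter_upwards [Metric.isOpen_ball.eventually_mem hus,
          hsheafev t ht s hs u hus, hsheafev t₀ ht₀ s hs u hus] with v hv1 hv2 hv3
        intro s' hs' hvs'
        refine htrans v s hs s' hs' hv1 hvs' ?_
        rw [hv2, hv3]
        exact hu s hs hus
      have hAclosed : IsClosed A := by
        refine isClosed_of_closure_subset fun u hu => ?_
        obtain ⟨s, hs, hus⟩ := hcov u
        have EN := (Metric.isOpen_ball.eventually_mem hus).and
          ((hsheafev t ht s hs u hus).and (hsheafev t₀ ht₀ s hs u hus))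
        obtain ⟨v, ⟨hv1, hv2, hv3⟩, hvA⟩ := (mem_closure_iff_nhds.1 hu) _ EN
        intro s' hs' hus'
        refine htrans u s hs s' hs' hus hus' ?_
        rw [← hv2, ← hv3]
        exact hvA s hs hv1
      have h0A : (0:I) ∈ A := by
        intro s hs h0s
        rw [hΓ0, hΓ0]
      have hclopen : IsClopen A := ⟨hAclosed, hAopen⟩
      have hAuniv : A = univ := hclopen.eq_univ ⟨0, h0A⟩
      have h1A : (1:I) ∈ A := hAuniv ▸ mem_univ 1
      obtain ⟨s, hs, h1s⟩ := hcov 1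
      have hsheaf1 := h1A s hs h1s
      apply (T s).toOpenPartialHomeomorph.injOn (hsrc t ht s hs 1 h1s) (hsrc t₀ ht₀ s hs 1 h1s)
      have m1 := (T s).mk_proj_snd (hsrc t ht s hs 1 h1s)
      have m2 := (T s).mk_proj_snd (hsrc t₀ ht₀ s hs 1 h1s)
      show (T s) (Γ t 1) = (T s) (Γ t₀ 1)
      rw [← m1, ← m2, hΓp, hΓp, hsheaf1, hright t, hright t₀]
    exact eventually_of_mem (Metric.ball_mem_nhds t₀ hδm0) final
  have hconst : ∀ t : I, Γ t 1 = Γ 0 1 := fun t =>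
    (((IsLocallyConstant.iff_eventually_eq _).2 main)).apply_eq_of_preconnectedSpace t 0
  have e0 : (Γ 0 : I → E) = Γ₀ :=
    hp.lift_unique' (Γ 0).continuous Γ₀.continuous
      (fun s => by rw [hΓp, h₀]) (by rw [hΓ0, h₀0])
  have e1 : (Γ 1 : I → E) = Γ₁ :=
    hp.lift_unique' (Γ 1).continuous Γ₁.continuous
      (fun s => by rw [hΓp, h₁]) (by rw [hΓ0, h₁0])
  calc (Γ₀ : I → E) 1 = Γ 0 1 := by rw [e0]
    _ = Γ 1 1 := by rw [hconst 1]
    _ = Γ₁ 1 := by rw [e1]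

/-- Lifts of the images of homotopic paths have the same endpoint. -/
lemma IsCoveringMap.liftEnd_indep (hp : IsCoveringMap p) [SimplyConnectedSpace E]
    {e₀ e : E} (e₁ : E) (he : p e₁ = p e₀) (α β : Path e₀ e) {Λα Λβ : C(I, E)}
    (hΛα0 : Λα 0 = e₁) (hΛβ0 : Λβ 0 = e₁)
    (hΛαp : ∀ s, p (Λα s) = p (α s)) (hΛβp : ∀ s, p (Λβ s) = p (β s)) :
    Λα 1 = Λβ 1 := by
  obtain ⟨h⟩ := SimplyConnectedSpace.paths_homotopic α β
  set H : C(I × I, X) := ⟨fun q => p (h q), hp.continuous.comp h.continuous⟩ with hH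
  have hH0 : ∀ s, H (0, s) = p (α s) := fun s => congrArg p (h.apply_zero s)
  have hH1 : ∀ s, H (1, s) = p (β s) := fun s => congrArg p (h.apply_one s)
  refine hp.monodromy' H e₁ (fun t => ?_) (fun t => ?_) ?_ Λα Λβ hΛα0 hΛβ0
    (fun s => (hΛαp s).trans (hH0 s).symm) (fun s => (hΛβp s).trans (hH1 s).symm)
  · show p (h (t, 0)) = p (h (0, 0))
    rw [h.source t, h.source 0]
  · show p (h (t, 1)) = p (h (0, 1))
    rw [h.target t, h.target 0]
  · show p e₁ = p (h (0, 0))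
    rw [h.source 0]
    exact he

/-- Existence of deck transformations moving a given point of the fiber to another. -/
theorem IsCoveringMap.exists_deck (hp : IsCoveringMap p) [SimplyConnectedSpace E]
    [LocallyPathConnectedSpace E] (e₀ e₁ : E) (h01 : p e₀ = p e₁) :
    ∃ f : E → E, Continuous f ∧ (∀ e, p (f e) = p e) ∧ f e₀ = e₁ := by
  have hlift : ∀ e : E, ∀ α : Path e₀ e, ∃ Λ : C(I, E), Λ 0 = e₁ ∧ ∀ s, p (Λ s) = p (α s) := by
    intro e α
    refine hp.exists_path_lift ⟨fun s => p (α s), hp.continuous.comp α.continuous⟩ e₁ ?_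
    show p e₁ = p (α 0)
    rw [α.source]
    exact h01.symm
  choose Λ hΛ0 hΛp using hlift
  set f : E → E := fun e => Λ e (PathConnectedSpace.somePath e₀ e) 1 with hf
  have hind : ∀ (e : E) (α : Path e₀ e) (Λ' : C(I, E)), Λ' 0 = e₁ →
      (∀ s, p (Λ' s) = p (α s)) → Λ' 1 = f e := by
    intro e α Λ' h0' hp'
    exact hp.liftEnd_indep e₁ h01.symm α (PathConnectedSpace.somePath e₀ e) h0'
      (hΛ0 e _) hp' (hΛp e _)
  have hfp : ∀ e, p (f e) = p e := by
    intro e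
    rw [hf]
    rw [hΛp e _ 1, Path.target]
  have hf0 : f e₀ = e₁ := by
    have := hind e₀ (Path.refl e₀) (ContinuousMap.const I e₁) rfl
      (fun s => by rw [Path.refl_apply]; exact h01.symm)
    simpa using this.symm
  have hfc : Continuous f := by
    rw [continuous_iff_continuousAt]
    intro e
    haveI : Nonempty ↥(p ⁻¹' {p e}) := ⟨⟨e, rfl⟩⟩
    obtain ⟨T, hT⟩ : ∃ T : Bundle.Trivialization (p ⁻¹' {p e}) p, p e ∈ T.baseSet :=
      ⟨_, (hp (p e)).mem_toTrivialization_baseSet⟩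
    have hfe_src : f e ∈ T.source := T.mem_source.2 (by rw [hfp]; exact hT)
    set c := (T (f e)).2 with hc
    obtain ⟨N, ⟨hN1, hN2⟩, hN3⟩ := (path_connected_basis e).mem_iff.1
      ((T.open_baseSet.preimage hp.continuous).mem_nhds hT)
    have hloc : ∀ e' ∈ N, f e' = T.toOpenPartialHomeomorph.symm (p e', c) := by
      intro e' he'
      set α := PathConnectedSpace.somePath e₀ e with hα
      have hβJ : JoinedIn N e e' := hN2.joinedIn e (mem_of_mem_nhds hN1) e' he'
      set β := hβJ.somePath with hβ
      have hβbase : ∀ s, p (β s) ∈ T.baseSet := fun s => hN3 (hβJ.somePath_mem s)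
      set sec : I → E := fun s => T.toOpenPartialHomeomorph.symm (p (β s), c) with hsec
      have hseccont : Continuous sec :=
        T.toOpenPartialHomeomorph.continuousOn_symm.comp_continuous
          ((hp.continuous.comp β.continuous).prodMk continuous_const)
          (fun s => T.mem_target.2 (hβbase s))
      have hsecp : ∀ s, p (sec s) = p (β s) := fun s =>
        T.proj_symm_apply (T.mem_target.2 (hβbase s))
      have hsec0 : sec 0 = f e := by
        show T.toOpenPartialHomeomorph.symm (p (β 0), c) = f e
        have hpb : p (β 0) = p (f e) := by rw [β.source, hfp]
        rw [hpb, hc]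
        exact T.symm_apply_mk_proj hfe_src
      set P1 : Path e₁ (f e) := ⟨Λ e α, hΛ0 e α, rfl⟩ with hP1
      set P2 : Path (f e) (sec 1) := ⟨⟨sec, hseccont⟩, hsec0, rfl⟩ with hP2
      set P : Path e₁ (sec 1) := P1.trans P2 with hP
      have hPlift : ∀ s, p (P.toContinuousMap s) = p ((α.trans β) s) := by
        intro s
        show p (P s) = p ((α.trans β) s)
        rw [hP, Path.trans_apply, Path.trans_apply]
        split_ifs with hs
        · exact hΛp e α _
        · exact hsecp _
      have hPe : P.toContinuousMap 1 = f e' :=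
        hind e' (α.trans β) P.toContinuousMap P.source hPlift
      have hP1' : P.toContinuousMap 1 = sec 1 := P.target
      rw [← hPe, hP1']
      show T.toOpenPartialHomeomorph.symm (p (β 1), c) = _
      rw [β.target]
    have htarget : (p e, c) ∈ T.target := T.mem_target.2 hT
    have hg : ContinuousAt (fun a => T.toOpenPartialHomeomorph.symm (p a, c)) e := by
      have h1 : ContinuousAt (fun a : E => (p a, c)) e :=
        hp.continuous.continuousAt.prodMk continuousAt_const
      exact ContinuousAt.comp (x := e) (g := T.toOpenPartialHomeomorph.symm)
        (T.toOpenPartialHomeomorph.continuousOn_symm.continuousAt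
          (T.open_target.mem_nhds htarget)) h1
    exact hg.congr (Filter.eventually_of_mem hN1 fun e' he' => (hloc e' he').symm)
  exact ⟨f, hfc, hfp, hf0⟩

/-- A covering map over a connected base with nonempty total space is surjective. -/
lemma IsCoveringMap.surjective_of_connected (hp : IsCoveringMap p) [ConnectedSpace X]
    [Nonempty E] : Function.Surjective p := by
  have hopen : IsOpen (range p) := hp.isOpenMap.isOpen_range
  have hclosed : IsClosed (range p) := by
    rw [← isOpen_compl_iff, isOpen_iff_mem_nhds]
    intro x hx
    obtain ⟨hd, U, hxU, hU, -, H, -⟩ := hp x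
    have hfe : IsEmpty ↥(p ⁻¹' {x}) := ⟨fun a => hx ⟨a.1, a.2⟩⟩
    refine Filter.mem_of_superset (hU.mem_nhds hxU) ?_
    rintro y hy ⟨a, rfl⟩
    exact hfe.elim (H ⟨a, hy⟩).2
  have hclopen : IsClopen (range p) := ⟨hclosed, hopen⟩
  have := hclopen.eq_univ ⟨p (Classical.arbitrary E), mem_range_self _⟩
  exact Set.range_eq_univ.1 this

end CoveringLemmas

section Main

theorem main_aux {E X : Type u}
    [TopologicalSpace E] [TopologicalSpace X]
    [ConnectedSpace X] [LocallyPathConnectedSpace X]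
    {p : E → X} (hp : IsCoveringMap p)
    [SimplyConnectedSpace E] [LocallyPathConnectedSpace E] :
    IsHomeomorph
      (Quotient.lift (s := MulAction.orbitRel (deckGroup p) E) p
        (fun a b h => by obtain ⟨g, rfl⟩ := h; exact g.2 b)) := by
  haveI : PathConnectedSpace E := inferInstance
  haveI : Nonempty E := PathConnectedSpace.nonempty
  refine ⟨hp.continuous.quotient_lift _, ?_, ?_, ?_⟩
  · -- open map
    intro U hU
    have himg : Quotient.lift (s := MulAction.orbitRel (deckGroup p) E) p
        (fun a b h => by obtain ⟨g, rfl⟩ := h; exact g.2 b) '' U =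
        p '' (Quotient.mk (MulAction.orbitRel (deckGroup p) E) ⁻¹' U) := by
      ext x
      constructor
      · rintro ⟨y, hyU, rfl⟩
        obtain ⟨e, rfl⟩ := Quotient.exists_rep y
        exact ⟨e, hyU, rfl⟩
      · rintro ⟨e, heU, rfl⟩
        exact ⟨Quotient.mk _ e, heU, rfl⟩
    rw [himg]
    exact hp.isOpenMap _ (continuous_quot_mk.isOpen_preimage U hU)
  · -- injective
    intro a b
    refine Quotient.inductionOn₂ a b fun a b hab => ?_
    have hpab : p a = p b := hab
    obtain ⟨f, hfc, hfp, hfb⟩ := hp.exists_deck b a hpab.symm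
    obtain ⟨g, hgc, hgp, hga⟩ := hp.exists_deck a b hpab
    have hgf : g ∘ f = id :=
      hp.eq_of_comp_eq (hgc.comp hfc) continuous_id
        (funext fun x => (hgp (f x)).trans (hfp x)) b
        (by show g (f b) = b; rw [hfb, hga])
    have hfg : f ∘ g = id :=
      hp.eq_of_comp_eq (hfc.comp hgc) continuous_id
        (funext fun x => (hfp (g x)).trans (hgp x)) a
        (by show f (g a) = a; rw [hga, hfb])
    let h : E ≃ₜ E :=
      ⟨⟨f, g, fun x => congrFun hgf x, fun x => congrFun hfg x⟩, hfc, hgc⟩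
    exact Quotient.sound ⟨⟨h, fun e => hfp e⟩, hfb⟩
  · -- surjective
    intro x
    obtain ⟨e, he⟩ := hp.surjective_of_connected x
    exact ⟨Quotient.mk _ e, he⟩

end Main

/-- For a covering map `p : E → X` with `X` connected and locally path-connected and `E` simply
connected and locally path-connected, the map `E ⧸ G → X` induced by `p` on the orbit space of
the action of the deck transformation group `G` (with the quotient topology) is a
homeomorphism. -/
theorem orbit_space_of_deckGroup_homeomorph {E X : Type u}
    [TopologicalSpace E] [TopologicalSpace X]
    [ConnectedSpace X] [LocallyPathConnectedSpace X]
    {p : E → X} (hp : IsCoveringMap p)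
    [SimplyConnectedSpace E] [LocallyPathConnectedSpace E] :
    IsHomeomorph
      (Quotient.lift (s := MulAction.orbitRel (deckGroup p) E) p
        (fun a b h => by obtain ⟨g, rfl⟩ := h; exact g.2 b)) := by
  exact main_aux hp
end

section
/- Let X be a connected, locally path-connected topological space and p : E → X a covering map with E simply connected and locally path-connected. Let G be the deck transformation group of p and H a subgroup of G, acting on E by h · e = h(e). Then: (1) the canonical quotient map E → E ⧸ H onto the orbit space (with quotient topology) is a covering map; and (2) the map E ⧸ H → X induced by p (well-defined since p is constant on H-orbits) is a covering map with connected total space E ⧸ H. -/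
universe u

section OrbitCoverAux

open Set MulAction

variable {E X : Type u} [TopologicalSpace E] [TopologicalSpace X] {p : E → X}

/-- The quotient map to the orbit space is open. -/
lemma qmap_image_open (H : Subgroup (deckGroup p)) {S : Set E} (hS : IsOpen S) :
    IsOpen (Quotient.mk (MulAction.orbitRel H E) '' S) := by
  refine (isQuotientMap_quot_mk (r := (MulAction.orbitRel H E).r)).isOpen_preimage.mp ?_
  have : Quot.mk _ ⁻¹' (Quotient.mk (MulAction.orbitRel H E) '' S)
      = ⋃ g : H, (fun a : E => g • a) '' S := by
    ext a
    constructor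
    · rintro ⟨s, hs, hqs⟩
      obtain ⟨g, rfl⟩ := Quotient.exact hqs.symm
      exact mem_iUnion_of_mem g ⟨s, hs, rfl⟩
    · rintro hmem
      obtain ⟨g, s, hs, rfl⟩ := mem_iUnion.mp hmem
      exact ⟨s, hs, (Quotient.sound (MulAction.mem_orbit s g)).symm⟩
  refine (congrArg IsOpen this).mpr ?_
  exact isOpen_iUnion fun g =>
    (Homeomorph.isOpenMap ((g : deckGroup p) : E ≃ₜ E)) S hS

variable {x₀ : X} (t : Bundle.Trivialization (↥(p ⁻¹' {x₀})) p) (V : Set X)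

/-- The sheet of index `i` over `V`. -/
def Sht (i : ↥(p ⁻¹' {x₀})) : Set E := {a | p a ∈ V ∧ (t a).2 = i}

lemma sheet_inj (hVb : V ⊆ t.baseSet) {a b : E} (ha : p a ∈ V) (hb : p b ∈ V)
    (hpab : p a = p b) (hiab : (t a).2 = (t b).2) : a = b := by
  have hsa : a ∈ t.source := t.mem_source.mpr (hVb ha)
  have hsb : b ∈ t.source := t.mem_source.mpr (hVb hb)
  refine t.injOn hsa hsb ?_
  show (t a : X × ↥(p ⁻¹' {x₀})) = t b
  exact Prod.ext (by rw [t.coe_fst hsa, t.coe_fst hsb, hpab]) hiab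

lemma sec_mem_sheet (hVb : V ⊆ t.baseSet) {x₁ : X} (hx₁ : x₁ ∈ V) (i : ↥(p ⁻¹' {x₀})) :
    t.toOpenPartialHomeomorph.symm (x₁, i) ∈ Sht t V i ∧
      p (t.toOpenPartialHomeomorph.symm (x₁, i)) = x₁ := by
  have hproj := t.proj_symm_apply' (x := i) (hVb hx₁)
  have happ := t.apply_symm_apply' (x := i) (hVb hx₁)
  exact ⟨⟨by rw [hproj]; exact hx₁, by rw [happ]⟩, hproj⟩

lemma sheet_eq_image (hVb : V ⊆ t.baseSet) (i : ↥(p ⁻¹' {x₀})) :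
    Sht t V i = (fun x₁ => t.toOpenPartialHomeomorph.symm (x₁, i)) '' V := by
  ext a
  constructor
  · rintro ⟨haV, hai⟩
    refine ⟨p a, haV, ?_⟩
    have hsa : a ∈ t.source := t.mem_source.mpr (hVb haV)
    have : (t a : X × ↥(p ⁻¹' {x₀})) = (p a, i) := Prod.ext (t.coe_fst hsa) hai
    calc t.toOpenPartialHomeomorph.symm (p a, i)
        = t.toOpenPartialHomeomorph.symm (t a) := by rw [this]
      _ = a := by
            have := t.toOpenPartialHomeomorph.left_inv hsa
            exact this
  · rintro ⟨x₁, hx₁, rfl⟩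
    exact (sec_mem_sheet t V hVb hx₁ i).1

lemma sheet_open [DiscreteTopology (↥(p ⁻¹' {x₀}))] (hVb : V ⊆ t.baseSet) (hVo : IsOpen V)
    (i : ↥(p ⁻¹' {x₀})) : IsOpen (Sht t V i) := by
  have : Sht t V i = t.source ∩ ⇑t ⁻¹' (V ×ˢ {i}) := by
    ext a
    constructor
    · rintro ⟨haV, hai⟩
      have hs := t.mem_source.mpr (hVb haV)
      exact ⟨hs, by rw [t.coe_fst hs]; exact haV, hai⟩
    · rintro ⟨hs, h1, h2⟩
      exact ⟨by rwa [← t.coe_fst hs], h2⟩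
  rw [this]
  exact t.toOpenPartialHomeomorph.isOpen_inter_preimage (hVo.prod (isOpen_discrete _))

lemma sheet_preconn (hVb : V ⊆ t.baseSet) (hVpc : IsPathConnected V) (i : ↥(p ⁻¹' {x₀})) :
    IsPreconnected (Sht t V i) := by
  rw [sheet_eq_image t V hVb i]
  refine IsPreconnected.image hVpc.isConnected.isPreconnected _ ?_
  refine ContinuousOn.comp t.toOpenPartialHomeomorph.continuousOn_symm
    (Continuous.continuousOn (by continuity)) ?_
  intro x₁ hx₁
  rw [t.target_eq]
  exact ⟨hVb hx₁, trivial⟩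

/-- The index of the image under a deck transformation is constant along a sheet. -/
lemma index_const_on_sheet [DiscreteTopology (↥(p ⁻¹' {x₀}))] (hVb : V ⊆ t.baseSet)
    (hVpc : IsPathConnected V) (H : Subgroup (deckGroup p)) (g : H)
    {i : ↥(p ⁻¹' {x₀})} {a b : E} (ha : a ∈ Sht t V i) (hb : b ∈ Sht t V i) :
    (t (g • a)).2 = (t (g • b)).2 := by
  refine IsPreconnected.constant (sheet_preconn t V hVb hVpc i)
    (f := fun c => (t (g • c)).2) ?_ ha hb
  refine Continuous.comp_continuousOn continuous_snd ?_
  refine ContinuousOn.comp t.toOpenPartialHomeomorph.continuousOn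
    (Continuous.continuousOn (((g : deckGroup p) : E ≃ₜ E)).continuous)
    (fun c hc => t.mem_source.mpr (hVb (by rw [show p (g • c) = p c from g.1.2 c]; exact hc.1)))


/-- Freeness of the action of the deck group on a preconnected total space. -/
lemma deck_free [PreconnectedSpace E] (hp : IsCoveringMap p) (H : Subgroup (deckGroup p))
    (g : H) (a : E) (hfix : g • a = a) : g = 1 := by
  have h1 : (fun e => ((g : deckGroup p) : E ≃ₜ E) e) = (id : E → E) :=
    hp.eq_of_comp_eq (((g : deckGroup p) : E ≃ₜ E)).continuous continuous_id
      (funext fun e => g.1.2 e) a hfix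
  exact Subtype.ext (Subtype.ext (Homeomorph.ext fun e => congrFun h1 e))

/-- The orbit map to the quotient by a subgroup of the deck group is a covering map. -/
lemma covering_qmap [SimplyConnectedSpace E] [LocallyPathConnectedSpace X] (hp : IsCoveringMap p)
    (H : Subgroup (deckGroup p)) :
    IsCoveringMap (Quotient.mk (MulAction.orbitRel H E)) := by
  classical
  set q : E → Quotient (MulAction.orbitRel H E) := Quotient.mk (MulAction.orbitRel H E) with hqdef
  have hqc : Continuous q := continuous_quotient_mk'
  have q_smul : ∀ (g : H) (a : E), q (g • a) = q a :=
    fun g a => Quotient.sound (MulAction.mem_orbit a g)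
  let pb : Quotient (MulAction.orbitRel H E) → X :=
    Quotient.lift p (fun a b h => by obtain ⟨g, rfl⟩ := h; exact g.1.2 b)
  have hpbc : Continuous pb := Continuous.quotient_lift hp.continuous _
  have pb_q : ∀ a : E, pb (q a) = p a := fun _ => rfl
  intro z₀
  haveI : Nonempty (p ⁻¹' {pb z₀}) := ⟨⟨z₀.out, by
    show p z₀.out = pb z₀
    conv_rhs => rw [← Quotient.out_eq z₀]
    rfl⟩⟩
  have hd := (hp (pb z₀)).1
  obtain ⟨t, ht⟩ : ∃ t : Bundle.Trivialization _ p, pb z₀ ∈ t.baseSet :=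
    ⟨_, (hp (pb z₀)).mem_toTrivialization_baseSet⟩
  haveI := hd
  set e : E := z₀.out with hedef
  have hz₀ : q e = z₀ := Quotient.out_eq z₀
  have hpe : p e = pb z₀ := by rw [← hz₀, pb_q]
  obtain ⟨V, ⟨hVo, hxV, hVpc⟩, hVb⟩ :=
    (isOpen_isPathConnected_basis (pb z₀)).mem_iff.mp (t.open_baseSet.mem_nhds ht)
  set i₀ : ↥(p ⁻¹' {pb z₀}) := (t e).2 with hi₀
  set U : Set E := Sht t V i₀ with hU
  have heU : e ∈ U := ⟨by rw [hpe]; exact hxV, rfl⟩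
  have hUo : IsOpen U := sheet_open t V hVb hVo i₀
  -- uniqueness of the group element moving `a` into `U`
  have uniq : ∀ (g g' : H) (a : E), g⁻¹ • a ∈ U → g'⁻¹ • a ∈ U → g = g' := by
    intro g g' a hg hg'
    have hp1 : p (g⁻¹ • a) = p (g'⁻¹ • a) := ((g⁻¹ : H).1.2 a).trans ((g'⁻¹ : H).1.2 a).symm
    have heq : g⁻¹ • a = g'⁻¹ • a := sheet_inj t V hVb hg.1 hg'.1 hp1 (hg.2.trans hg'.2.symm)
    have hfix : (g'⁻¹ * g) • (g⁻¹ • a) = g⁻¹ • a := by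
      rw [mul_smul, smul_inv_smul]; exact heq.symm
    have := deck_free hp H (g'⁻¹ * g) _ hfix
    exact (inv_mul_eq_one.mp this).symm
  -- the index function
  set idx : E → ↥H :=
    fun a => if c : ∃ g : H, g⁻¹ • a ∈ U then c.choose else 1 with hidx
  have idx_spec : ∀ (g : H) (a : E), g⁻¹ • a ∈ U → idx a = g := by
    intro g a hg
    have c : ∃ g' : H, g'⁻¹ • a ∈ U := ⟨g, hg⟩
    rw [hidx]; dsimp only; rw [dif_pos c]
    exact uniq _ _ a c.choose_spec hg
  set W : Set (Quotient (MulAction.orbitRel H E)) := q '' U with hW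
  have hWo : IsOpen W := qmap_image_open H hUo
  have hz₀W : z₀ ∈ W := ⟨e, heU, hz₀⟩
  set sec : Quotient (MulAction.orbitRel H E) → E :=
    fun z => t.toOpenPartialHomeomorph.symm (pb z, i₀) with hsec
  have sec_spec : ∀ u ∈ U, sec (q u) = u := by
    intro u hu
    have hsrc : u ∈ t.source := t.mem_source.mpr (hVb hu.1)
    have : (t u : X × ↥(p ⁻¹' {pb z₀})) = (p u, i₀) := Prod.ext (t.coe_fst hsrc) hu.2
    rw [hsec]; dsimp only; rw [pb_q, ← this]
    exact t.toOpenPartialHomeomorph.left_inv hsrc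
  have mem_src : ∀ a : E, a ∈ q ⁻¹' W ↔ ∃ g : H, g⁻¹ • a ∈ U := by
    intro a
    constructor
    · rintro ⟨u, hu, hq⟩
      obtain ⟨g, rfl⟩ := Quotient.exact hq
      exact ⟨g⁻¹, by rw [inv_inv]; exact hu⟩
    · rintro ⟨g, hg⟩
      exact ⟨g⁻¹ • a, hg, q_smul g⁻¹ a⟩
  letI : TopologicalSpace ↥H := ⊥
  haveI : DiscreteTopology ↥H := ⟨rfl⟩
  refine IsEvenlyCovered.to_isEvenlyCovered_preimage (IsEvenlyCovered.of_trivialization (t :=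
     { toOpenPartialHomeomorph :=
        { toFun := fun a => (q a, idx a)
          invFun := fun w => (w.2 : ↥H) • sec w.1
          source := q ⁻¹' W
          target := W ×ˢ Set.univ
          map_source' := fun a ha => ⟨ha, trivial⟩
          map_target' := ?_
          left_inv' := ?_
          right_inv' := ?_
          open_source := hWo.preimage hqc
          open_target := hWo.prod isOpen_univ
          continuousOn_toFun := ?_
          continuousOn_invFun := ?_ }
       baseSet := W
       open_baseSet := hWo
       source_eq := rfl
       target_eq := rfl
       proj_toFun := fun a _ => rfl }) hz₀W)
  · -- map_target'
    rintro ⟨z, g⟩ ⟨⟨u, hu, rfl⟩, -⟩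
    show q (g • sec (q u)) ∈ W
    rw [sec_spec u hu, q_smul]
    exact ⟨u, hu, rfl⟩
  · -- left_inv'
    intro a ha
    obtain ⟨g, hg⟩ := (mem_src a).mp ha
    show (idx a : ↥H) • sec (q a) = a
    rw [idx_spec g a hg]
    have : q a = q (g⁻¹ • a) := (q_smul g⁻¹ a).symm
    rw [this, sec_spec _ hg, smul_inv_smul]
  · -- right_inv'
    rintro ⟨z, g⟩ ⟨⟨u, hu, rfl⟩, -⟩
    show (q (g • sec (q u)), idx (g • sec (q u))) = (q u, g)
    rw [sec_spec u hu]
    have h1 : idx (g • u) = g := idx_spec g (g • u) (by rw [inv_smul_smul]; exact hu)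
    rw [q_smul, h1]
  · -- continuousOn_toFun
    refine ContinuousOn.prodMk hqc.continuousOn ?_
    intro a ha
    obtain ⟨g, hg⟩ := (mem_src a).mp ha
    refine ContinuousAt.continuousWithinAt ?_
    have hNo : IsOpen ((fun b : E => g⁻¹ • b) ⁻¹' U) :=
      hUo.preimage (((g⁻¹ : H) : deckGroup p) : E ≃ₜ E).continuous
    have hev : idx =ᶠ[nhds a] fun _ => g :=
      Filter.eventuallyEq_of_mem (hNo.mem_nhds hg) (fun b hb => idx_spec g b hb)
    exact continuousAt_const.congr hev.symm
  · -- continuousOn_invFun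
    rintro ⟨z, g⟩ ⟨⟨u, hu, rfl⟩, -⟩
    refine ContinuousAt.continuousWithinAt ?_
    have hbmem : pb (q u) ∈ t.baseSet := by rw [pb_q]; exact hVb hu.1
    have hOo : IsOpen ((pb ⁻¹' t.baseSet) ×ˢ ({g} : Set ↥H)) :=
      (t.open_baseSet.preimage hpbc).prod (isOpen_discrete _)
    have hOw : ((q u, g) : Quotient (MulAction.orbitRel H E) × ↥H)
        ∈ (pb ⁻¹' t.baseSet) ×ˢ ({g} : Set ↥H) := ⟨hbmem, rfl⟩
    have hev : (fun w : Quotient (MulAction.orbitRel H E) × ↥H => (w.2 : ↥H) • sec w.1)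
        =ᶠ[nhds (q u, g)] fun w => g • sec w.1 := by
      refine Filter.eventuallyEq_of_mem (hOo.mem_nhds hOw) ?_
      rintro ⟨z', g'⟩ ⟨-, hg'⟩
      simp only [Set.mem_singleton_iff] at hg'
      rw [hg']
    refine ContinuousAt.congr ?_ hev.symm
    have hsymm : ContinuousAt (t.toOpenPartialHomeomorph.symm) (pb (q u), i₀) := by
      refine t.toOpenPartialHomeomorph.symm.continuousAt ?_
      rw [OpenPartialHomeomorph.symm_source, t.target_eq]
      exact ⟨hbmem, trivial⟩
    have hpair : ContinuousAt
        (fun w : Quotient (MulAction.orbitRel H E) × ↥H => (pb w.1, i₀)) (q u, g) :=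
      ((hpbc.comp continuous_fst).prodMk continuous_const).continuousAt
    show ContinuousAt ((fun b : E => g • b) ∘ (t.toOpenPartialHomeomorph.symm ∘
      (fun w : Quotient (MulAction.orbitRel H E) × ↥H => (pb w.1, i₀)))) (q u, g)
    exact ContinuousAt.comp ((((g : deckGroup p) : E ≃ₜ E).continuous.continuousAt))
      (ContinuousAt.comp hsymm hpair)


/-- The induced map from the orbit space is a covering map. -/
lemma covering_lift [SimplyConnectedSpace E] [LocallyPathConnectedSpace X] (hp : IsCoveringMap p)
    (H : Subgroup (deckGroup p)) :
    IsCoveringMap (Quotient.lift (s := MulAction.orbitRel H E) p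
      (fun a b h => by obtain ⟨g, rfl⟩ := h; exact g.1.2 b)) := by
  classical
  set q : E → Quotient (MulAction.orbitRel H E) := Quotient.mk (MulAction.orbitRel H E) with hqdef
  have hqc : Continuous q := continuous_quotient_mk'
  have q_smul : ∀ (g : H) (a : E), q (g • a) = q a :=
    fun g a => Quotient.sound (MulAction.mem_orbit a g)
  set pb : Quotient (MulAction.orbitRel H E) → X :=
    Quotient.lift p (fun a b h => by obtain ⟨g, rfl⟩ := h; exact g.1.2 b) with hpbdef
  have hpbc : Continuous pb := Continuous.quotient_lift hp.continuous _
  have pb_q : ∀ a : E, pb (q a) = p a := fun _ => rfl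
  have p_out : ∀ z : Quotient (MulAction.orbitRel H E), p z.out = pb z := by
    intro z
    conv_rhs => rw [← Quotient.out_eq z]
    rfl
  intro x₀
  rcases isEmpty_or_nonempty (p ⁻¹' {x₀}) with hemp | hne
  · obtain ⟨_, U, hxU, hUo, -, Φ, -⟩ := hp x₀
    haveI : IsEmpty (pb ⁻¹' {x₀}) := ⟨fun ⟨z, hz⟩ => hemp.elim ⟨z.out, by
      show p z.out = x₀
      rw [p_out]; exact hz⟩⟩
    refine IsEvenlyCovered.of_preimage_eq_empty _ (hUo.mem_nhds hxU) ?_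
    ext z
    simp only [Set.mem_preimage, Set.mem_empty_iff_false, iff_false]
    intro hz
    have hz' : p z.out ∈ U := by rw [p_out]; exact hz
    exact hemp.elim (Φ ⟨z.out, hz'⟩).2
  have hd := (hp x₀).1
  obtain ⟨t, ht⟩ : ∃ t : Bundle.Trivialization _ p, x₀ ∈ t.baseSet :=
    ⟨_, (hp x₀).mem_toTrivialization_baseSet⟩
  haveI := hd
  obtain ⟨V, ⟨hVo, hxV, hVpc⟩, hVb⟩ :=
    (isOpen_isPathConnected_basis x₀).mem_iff.mp (t.open_baseSet.mem_nhds ht)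
  set c : ↥(p ⁻¹' {x₀}) → E := fun i => t.toOpenPartialHomeomorph.symm (x₀, i) with hc
  have c_mem : ∀ i, c i ∈ Sht t V i ∧ p (c i) = x₀ := fun i => sec_mem_sheet t V hVb hxV i
  set sd : Setoid (↥(p ⁻¹' {x₀})) := Setoid.ker (fun i => q (c i)) with hsd
  -- key invariance lemma
  have L1 : ∀ a b : E, p a ∈ V → p b ∈ V → q a = q b →
      q (c (t a).2) = q (c (t b).2) := by
    intro a b ha hb hq
    obtain ⟨g, hg0⟩ := Quotient.exact hq
    have hg : g • b = a := hg0
    set i : ↥(p ⁻¹' {x₀}) := (t b).2 with hi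
    have hbSht : b ∈ Sht t V i := ⟨hb, rfl⟩
    have hidx : (t (g • c i)).2 = (t (g • b)).2 :=
      index_const_on_sheet t V hVb hVpc H g (c_mem i).1 hbSht
    rw [hg] at hidx
    have h1 : p (g • c i) = x₀ := (g.1.2 (c i)).trans (c_mem i).2
    have h2 : g • c i = c (t a).2 := by
      refine sheet_inj t V hVb ?_ ?_ ?_ ?_
      · rw [h1]; exact hxV
      · rw [(c_mem (t a).2).2]; exact hxV
      · rw [h1, (c_mem (t a).2).2]
      · rw [hidx]
        exact ((c_mem (t a).2).1.2).symm ▸ rfl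
    calc q (c (t a).2) = q (g • c i) := by rw [h2]
      _ = q (c i) := q_smul g (c i)
  have L2 : ∀ x₁ ∈ V, ∀ i j : ↥(p ⁻¹' {x₀}), q (c i) = q (c j) →
      q (t.toOpenPartialHomeomorph.symm (x₁, i)) = q (t.toOpenPartialHomeomorph.symm (x₁, j)) := by
    intro x₁ hx₁ i j hij
    obtain ⟨g, hg0⟩ := Quotient.exact hij
    have hg : g • c j = c i := hg0
    set s : E := t.toOpenPartialHomeomorph.symm (x₁, j) with hs
    have hsSht : s ∈ Sht t V j ∧ p s = x₁ := sec_mem_sheet t V hVb hx₁ j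
    have hidx : (t (g • s)).2 = (t (g • c j)).2 :=
      index_const_on_sheet t V hVb hVpc H g hsSht.1 (c_mem j).1
    rw [hg] at hidx
    have h1 : p (g • s) = x₁ := (g.1.2 s).trans hsSht.2
    have h2 : g • s = t.toOpenPartialHomeomorph.symm (x₁, i) := by
      have hi' := sec_mem_sheet t V hVb hx₁ i
      refine sheet_inj t V hVb ?_ ?_ ?_ ?_
      · rw [h1]; exact hx₁
      · rw [hi'.2]; exact hx₁
      · rw [h1, hi'.2]
      · rw [hidx, (c_mem i).1.2, hi'.1.2]
    calc q (t.toOpenPartialHomeomorph.symm (x₁, i)) = q (g • s) := by rw [h2]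
      _ = q s := q_smul g s
  set idx : Quotient (MulAction.orbitRel H E) → Quotient sd :=
    fun z => Quotient.mk sd ((t z.out).2) with hidxdef
  have idx_spec : ∀ a : E, p a ∈ V → idx (q a) = Quotient.mk sd ((t a).2) := by
    intro a ha
    have hout : q (q a).out = q a := Quotient.out_eq (q a)
    have hpout : p (q a).out ∈ V := by rw [p_out, pb_q]; exact ha
    exact Quotient.sound (L1 _ a hpout ha hout)
  have sec_eq : ∀ a : E, p a ∈ V → t.toOpenPartialHomeomorph.symm (p a, (t a).2) = a := by
    intro a ha
    have hsrc : a ∈ t.source := t.mem_source.mpr (hVb ha)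
    have : (t a : X × ↥(p ⁻¹' {x₀})) = (p a, (t a).2) := Prod.ext (t.coe_fst hsrc) rfl
    rw [← this]
    exact t.toOpenPartialHomeomorph.left_inv hsrc
  letI : TopologicalSpace (Quotient sd) := ⊥
  haveI : DiscreteTopology (Quotient sd) := ⟨rfl⟩
  refine IsEvenlyCovered.to_isEvenlyCovered_preimage (IsEvenlyCovered.of_trivialization (t :=
     { toOpenPartialHomeomorph :=
        { toFun := fun z => (pb z, idx z)
          invFun := fun w => q (t.toOpenPartialHomeomorph.symm (w.1, (Quotient.out w.2)))
          source := pb ⁻¹' V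
          target := V ×ˢ Set.univ
          map_source' := fun z hz => ⟨hz, trivial⟩
          map_target' := ?_
          left_inv' := ?_
          right_inv' := ?_
          open_source := hVo.preimage hpbc
          open_target := hVo.prod isOpen_univ
          continuousOn_toFun := ?_
          continuousOn_invFun := ?_ }
       baseSet := V
       open_baseSet := hVo
       source_eq := rfl
       target_eq := rfl
       proj_toFun := fun z _ => rfl }) hxV)
  · -- map_target'
    rintro ⟨x₁, ξ⟩ ⟨hx₁, -⟩
    show pb (q (t.toOpenPartialHomeomorph.symm (x₁, ξ.out))) ∈ V
    rw [pb_q, t.proj_symm_apply' (hVb hx₁)]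
    exact hx₁
  · -- left_inv'
    intro z hz
    show q (t.toOpenPartialHomeomorph.symm (pb z, (idx z).out)) = z
    have ha : p z.out ∈ V := by rw [p_out]; exact hz
    have h1 : q (c (idx z).out) = q (c ((t z.out).2)) := Quotient.mk_out ((t z.out).2)
    have h2 := L2 (pb z) hz (idx z).out ((t z.out).2) h1
    rw [h2, ← p_out z, sec_eq z.out ha]
    exact Quotient.out_eq z
  · -- right_inv'
    rintro ⟨x₁, ξ⟩ ⟨hx₁, -⟩
    set b : E := t.toOpenPartialHomeomorph.symm (x₁, ξ.out) with hb
    have hpb : p b = x₁ := t.proj_symm_apply' (hVb hx₁)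
    have htb : (t b : X × ↥(p ⁻¹' {x₀})) = (x₁, ξ.out) := t.apply_symm_apply' (hVb hx₁)
    show (pb (q b), idx (q b)) = (x₁, ξ)
    rw [pb_q, hpb, idx_spec b (by rw [hpb]; exact hx₁)]
    have : (t b).2 = ξ.out := by rw [htb]
    rw [this, Quotient.out_eq]
  · -- continuousOn_toFun
    refine ContinuousOn.prodMk hpbc.continuousOn ?_
    intro z hz
    refine ContinuousAt.continuousWithinAt ?_
    have ha : p z.out ∈ V := by rw [p_out]; exact hz
    set i : ↥(p ⁻¹' {x₀}) := (t z.out).2 with hi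
    have hNo : IsOpen (q '' Sht t V i) := qmap_image_open H (sheet_open t V hVb hVo i)
    have hzN : z ∈ q '' Sht t V i := ⟨z.out, ⟨ha, rfl⟩, Quotient.out_eq z⟩
    have hev : idx =ᶠ[nhds z] fun _ => Quotient.mk sd i := by
      refine Filter.eventuallyEq_of_mem (hNo.mem_nhds hzN) ?_
      rintro z' ⟨b, hbSht, rfl⟩
      rw [idx_spec b hbSht.1, hbSht.2]
    exact continuousAt_const.congr hev.symm
  · -- continuousOn_invFun
    rintro ⟨x₁, ξ⟩ ⟨hx₁, -⟩
    refine ContinuousAt.continuousWithinAt ?_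
    have hOo : IsOpen (t.baseSet ×ˢ ({ξ} : Set (Quotient sd))) :=
      t.open_baseSet.prod (isOpen_discrete _)
    have hOw : ((x₁, ξ) : X × Quotient sd) ∈ t.baseSet ×ˢ ({ξ} : Set (Quotient sd)) :=
      ⟨hVb hx₁, rfl⟩
    have hev : (fun w : X × Quotient sd => q (t.toOpenPartialHomeomorph.symm (w.1, w.2.out)))
        =ᶠ[nhds (x₁, ξ)] fun w => q (t.toOpenPartialHomeomorph.symm (w.1, ξ.out)) := by
      refine Filter.eventuallyEq_of_mem (hOo.mem_nhds hOw) ?_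
      rintro ⟨x₂, ξ'⟩ ⟨-, hξ'⟩
      simp only [Set.mem_singleton_iff] at hξ'
      rw [hξ']
    refine ContinuousAt.congr ?_ hev.symm
    have hsymm : ContinuousAt (t.toOpenPartialHomeomorph.symm) (x₁, ξ.out) := by
      refine t.toOpenPartialHomeomorph.symm.continuousAt ?_
      rw [OpenPartialHomeomorph.symm_source, t.target_eq]
      exact ⟨hVb hx₁, trivial⟩
    have hpair : ContinuousAt (fun w : X × Quotient sd => (w.1, ξ.out)) (x₁, ξ) :=
      (continuous_fst.prodMk continuous_const).continuousAt
    show ContinuousAt (q ∘ (t.toOpenPartialHomeomorph.symm ∘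
      (fun w : X × Quotient sd => (w.1, ξ.out)))) (x₁, ξ)
    exact ContinuousAt.comp hqc.continuousAt (ContinuousAt.comp hsymm hpair)

end OrbitCoverAux

/-- For a covering map `p : E → X` with `X` connected and locally path-connected, `E` simply
connected and locally path-connected, and a subgroup `H` of the deck transformation group of
`p`: (1) the canonical map from `E` to the orbit space `E ⧸ H` (with the quotient topology) is
a covering map, and (2) the map `E ⧸ H → X` induced by `p` is a covering map whose total space
`E ⧸ H` is connected. -/
theorem orbit_space_of_deck_subgroup_coverings {E X : Type u}
    [TopologicalSpace E] [TopologicalSpace X]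
    [ConnectedSpace X] [LocallyPathConnectedSpace X]
    {p : E → X} (hp : IsCoveringMap p)
    [SimplyConnectedSpace E] [LocallyPathConnectedSpace E]
    (H : Subgroup (deckGroup p)) :
    IsCoveringMap (Quotient.mk (MulAction.orbitRel H E)) ∧
      IsCoveringMap
        (Quotient.lift (s := MulAction.orbitRel H E) p
          (fun a b h => by obtain ⟨g, rfl⟩ := h; exact g.1.2 b)) ∧
      ConnectedSpace (Quotient (MulAction.orbitRel H E)) := by
  refine ⟨covering_qmap hp H, covering_lift hp H, ?_⟩
  have hqc : Continuous (Quotient.mk (MulAction.orbitRel H E)) := continuous_quotient_mk'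
  have hsurj : Function.Surjective (Quotient.mk (MulAction.orbitRel H E)) :=
    fun z => ⟨z.out, Quotient.out_eq z⟩
  have hconn : IsConnected (Set.range (Quotient.mk (MulAction.orbitRel H E))) :=
    isConnected_range hqc
  rw [hsurj.range_eq] at hconn
  exact connectedSpace_iff_univ.mpr hconn
end

section
/- Let p : E → Circle be a covering map, where Circle is the unit circle in ℂ, with E connected and locally path-connected. Then either there exists a homeomorphism h : ℝ ≃ₜ E such that p(h(t)) = exp(t·i) for all t ∈ ℝ, or there exist a positive integer n and a homeomorphism h : Circle ≃ₜ E such that p(h(z)) = zⁿ for all z ∈ Circle. -/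
open Set Topology Metric Function

namespace CircleCoverAux

lemma exp_continuous : Continuous Circle.exp := Circle.exp.continuous

lemma exp_surjective : Function.Surjective Circle.exp := fun z => ⟨Complex.arg z, Circle.exp_arg z⟩

lemma exp_isOpenMap : IsOpenMap Circle.exp := isLocalHomeomorph_circleExp.isOpenMap

lemma exp_isQuotientMap : IsQuotientMap Circle.exp :=
  exp_isOpenMap.isQuotientMap exp_continuous exp_surjective

lemma exp_nat_mul (n : ℕ) (t : ℝ) : Circle.exp (n * t) = Circle.exp t ^ n := by
  induction n with
  | zero => simp [Circle.exp_zero]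
  | succ k ih =>
    push_cast
    rw [add_mul, one_mul, Circle.exp_add, ih, pow_succ]

lemma exp_int_two_pi (m : ℤ) (t : ℝ) : Circle.exp (t + m * (2 * Real.pi)) = Circle.exp t := by
  rw [Circle.exp_add, Circle.exp_int_mul_two_pi, mul_one]

-- pasting for closed sets
lemma continuousOn_union_closed {α β : Type*} [TopologicalSpace α] [TopologicalSpace β]
    {f : α → β} {s t : Set α} (hs : IsClosed s) (ht : IsClosed t)
    (hfs : ContinuousOn f s) (hft : ContinuousOn f t) : ContinuousOn f (s ∪ t) := by
  intro x hx
  have hcwa : ∀ {u : Set α}, IsClosed u → ContinuousOn f u → ContinuousWithinAt f u x := by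
    intro u hu hcu
    by_cases hxu : x ∈ u
    · exact hcu x hxu
    · exact continuousWithinAt_of_notMem_closure (by rwa [hu.closure_eq])
  exact (hcwa hs hfs).union (hcwa ht hft)


variable {E : Type*} [TopologicalSpace E] {p : E → Circle}

/-- the canonical section of a trivialization through a point -/
noncomputable def sec {F : Type*} [TopologicalSpace F] (T : Bundle.Trivialization F p)
    (i : F) (z : Circle) : E :=
  T.toOpenPartialHomeomorph.symm (z, i)

lemma sec_proj {F : Type*} [TopologicalSpace F] (T : Bundle.Trivialization F p) (i : F) {z : Circle}
    (hz : z ∈ T.baseSet) : p (sec T i z) = z :=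
  T.proj_symm_apply' hz

lemma sec_apply_self {F : Type*} [TopologicalSpace F] (T : Bundle.Trivialization F p) {e : E}
    (he : p e ∈ T.baseSet) : sec T (T e).2 (p e) = e := by
  have hsrc : e ∈ T.source := T.mem_source.2 he
  have h1 : ((p e, (T e).2) : Circle × F) = T e := T.mk_proj_snd hsrc
  rw [sec, h1]
  exact T.toOpenPartialHomeomorph.left_inv hsrc

lemma sec_continuousOn {F : Type*} [TopologicalSpace F] (T : Bundle.Trivialization F p) (i : F) :
    ContinuousOn (sec T i) T.baseSet := by
  have h1 : ContinuousOn (T.toOpenPartialHomeomorph.symm) T.target :=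
    T.toOpenPartialHomeomorph.symm.continuousOn
  refine (h1.comp (by fun_prop) ?_)
  intro z hz
  exact T.mem_target.2 hz

/-- uniqueness of lifts: a lift of `exp` on a preconnected set within a trivialization
is given by the section through any of its points. -/
lemma eqOn_sec (hp : IsCoveringMap p) {F : Type*} [TopologicalSpace F] [DiscreteTopology F]
    (T : Bundle.Trivialization F p) {J : Set ℝ} (hJ : IsPreconnected J)
    {g : ℝ → E} (hg : ContinuousOn g J) (hpg : ∀ s ∈ J, p (g s) = Circle.exp s)
    (hsub : ∀ s ∈ J, Circle.exp s ∈ T.baseSet) {t : ℝ} (ht : t ∈ J) :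
    EqOn g (fun s => sec T (T (g t)).2 (Circle.exp s)) J := by
  apply hp.eqOn_of_comp_eqOn hJ hg
  · exact (sec_continuousOn T _).comp exp_continuous.continuousOn hsub
  · intro s hs
    simp only [comp_apply]
    rw [hpg s hs, sec_proj T _ (hsub s hs)]
  · exact ht
  · have : Circle.exp t = p (g t) := (hpg t ht).symm
    simp only [this]
    exact (sec_apply_self T (this ▸ hsub t ht)).symm

/-- Lebesgue number: uniform radius such that every ball maps into an evenly covered set. -/
lemma fiber_nonempty [Nonempty E] (hp : IsCoveringMap p) (z : Circle) :
    Nonempty (p ⁻¹' {z}) := by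
  have hopen : IsOpen (range p) := hp.isOpenMap.isOpen_range
  have hclosed : IsClosed (range p) := by
    rw [← closure_subset_iff_isClosed]
    intro y hy
    obtain ⟨_, U, hyU, hU, _, H, _⟩ := hp y
    obtain ⟨_, hwU, e, rfl⟩ := mem_closure_iff.1 hy U hU hyU
    obtain ⟨x, hx⟩ := (H ⟨e, hwU⟩).2
    exact ⟨x, hx⟩
  have : range p = univ := by
    rcases isClopen_iff.1 ⟨hclosed, hopen⟩ with h | h
    · obtain ⟨e⟩ := ‹Nonempty E›
      exact absurd h (Nonempty.ne_empty ⟨p e, mem_range_self e⟩)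
    · exact h
  obtain ⟨x, hx⟩ := range_eq_univ.1 this z
  exact ⟨⟨x, hx⟩⟩

lemma exists_delta (hp : IsCoveringMap p) [∀ z, Nonempty (p ⁻¹' {z})] :
    ∃ δ > 0, ∀ t : ℝ, ∃ z : Circle,
      ∀ s ∈ ball t δ, Circle.exp s ∈ ((hp z).toTrivialization).baseSet := by
  have hcov : (Icc (0:ℝ) (2 * Real.pi)) ⊆
      ⋃ z : Circle, Circle.exp ⁻¹' ((hp z).toTrivialization).baseSet := by
    intro s _
    exact mem_iUnion.2 ⟨Circle.exp s, (hp (Circle.exp s)).mem_toTrivialization_baseSet⟩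
  obtain ⟨δ, hδ, h⟩ := lebesgue_number_lemma_of_metric isCompact_Icc
    (fun z => ((hp z).toTrivialization).open_baseSet.preimage exp_continuous) hcov
  refine ⟨δ, hδ, fun t => ?_⟩
  have hpi : (0:ℝ) < 2 * Real.pi := by positivity
  set m : ℤ := ⌊t / (2 * Real.pi)⌋ with hm
  have ht' : t - m * (2 * Real.pi) ∈ Icc (0:ℝ) (2 * Real.pi) := by
    constructor
    · have := Int.sub_floor_div_mul_nonneg t hpi
      linarith [this]
    · have := Int.sub_floor_div_mul_lt t hpi
      linarith [this]
  obtain ⟨z, hz⟩ := h _ ht'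
  refine ⟨z, fun s hs => ?_⟩
  have : s - m * (2 * Real.pi) ∈ ball (t - m * (2 * Real.pi)) δ := by
    simp only [mem_ball, Real.dist_eq] at hs ⊢
    simpa using hs
  have h3 := hz this
  simp only [mem_preimage] at h3
  have he : Circle.exp (s - ↑m * (2 * Real.pi)) = Circle.exp s :=
    Circle.exp_eq_exp.2 ⟨-m, by push_cast; ring⟩
  rwa [he] at h3

end CircleCoverAux


open Set Topology Metric Function

namespace CircleCoverAux

variable {E : Type*} [TopologicalSpace E] {p : E → Circle}

lemma exists_lift_on (hp : IsCoveringMap p) [∀ z, Nonempty (p ⁻¹' {z})] {δ : ℝ} (hδpos : 0 < δ)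
    (hδ : ∀ t : ℝ, ∃ z : Circle,
      ∀ s ∈ ball t δ, Circle.exp s ∈ ((hp z).toTrivialization).baseSet)
    (t₀ : ℝ) (e₁ : E) (he : p e₁ = Circle.exp t₀) (n : ℕ) :
    ∃ g : ℝ → E, g t₀ = e₁ ∧ ContinuousOn g (Icc (t₀ - n * (δ/2)) (t₀ + n * (δ/2))) ∧
      ∀ s ∈ Icc (t₀ - n * (δ/2)) (t₀ + n * (δ/2)), p (g s) = Circle.exp s := by
  set h : ℝ := δ/2 with hh
  have hhpos : 0 < h := by positivity
  have hhδ : h < δ := by rw [hh]; linarith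
  induction n with
  | zero =>
    refine ⟨fun _ => e₁, rfl, continuousOn_const, fun s hs => ?_⟩
    simp only [Nat.cast_zero, zero_mul, sub_zero, add_zero, Icc_self, mem_singleton_iff] at hs
    rw [hs, he]
  | succ n ih =>
    obtain ⟨g, hg1, hg2, hg3⟩ := ih
    set a : ℝ := t₀ - n * h with ha
    set b : ℝ := t₀ + n * h with hb
    have hab : a ≤ b := by
      have : (0:ℝ) ≤ n * h := by positivity
      simp only [ha, hb]; linarith
    have hat : a ≤ t₀ := by
      have h0 : (0:ℝ) ≤ n * h := by positivity
      simp only [ha]; linarith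
    have htb : t₀ ≤ b := by
      have h0 : (0:ℝ) ≤ n * h := by positivity
      simp only [hb]; linarith
    obtain ⟨za, hza⟩ := hδ a
    obtain ⟨zb, hzb⟩ := hδ b
    set Ta := (hp za).toTrivialization
    set Tb := (hp zb).toTrivialization
    set ia := (Ta (g a)).2
    set ib := (Tb (g b)).2
    set g' : ℝ → E := fun s =>
      if s < a then sec Ta ia (Circle.exp s) else if s ≤ b then g s else sec Tb ib (Circle.exp s)
      with hg'
    have hmema : a ∈ Icc a b := ⟨le_refl a, hab⟩
    have hmemb : b ∈ Icc a b := ⟨hab, le_refl b⟩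
    have hsa : sec Ta ia (Circle.exp a) = g a := by
      have h1 : Circle.exp a = p (g a) := (hg3 a hmema).symm
      rw [h1]
      exact sec_apply_self Ta (by rw [← h1]; exact hza a (mem_ball_self hδpos))
    have hsb : sec Tb ib (Circle.exp b) = g b := by
      have h1 : Circle.exp b = p (g b) := (hg3 b hmemb).symm
      rw [h1]
      exact sec_apply_self Tb (by rw [← h1]; exact hzb b (mem_ball_self hδpos))
    have heqmid : EqOn g' g (Icc a b) := by
      intro s hs
      simp only [hg', if_neg (not_lt.2 hs.1), if_pos hs.2]
    have heqb : EqOn g' (fun s => sec Tb ib (Circle.exp s)) (Icc b (b + h)) := by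
      intro s hs
      rcases eq_or_lt_of_le hs.1 with rfl | hlt
      · rw [heqmid hmemb, ← hsb]
      · simp only [hg', if_neg (not_lt.2 (hab.trans hlt.le)), if_neg (not_le.2 hlt)]
    have heqa : EqOn g' (fun s => sec Ta ia (Circle.exp s)) (Icc (a - h) a) := by
      intro s hs
      rcases eq_or_lt_of_le hs.2 with rfl | hlt
      · rw [heqmid hmema, ← hsa]
      · simp only [hg', if_pos hlt]
    have hballa : Icc (a - h) a ⊆ ball a δ := fun s hs => by
      simp only [mem_ball, Real.dist_eq, abs_lt]
      constructor <;> [linarith [hs.1]; linarith [hs.2]]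
    have hballb : Icc b (b + h) ⊆ ball b δ := fun s hs => by
      simp only [mem_ball, Real.dist_eq, abs_lt]
      constructor <;> [linarith [hs.1]; linarith [hs.2]]
    have hconta : ContinuousOn g' (Icc (a - h) a) := by
      refine ContinuousOn.congr ?_ heqa
      exact (sec_continuousOn Ta ia).comp exp_continuous.continuousOn
        (fun s hs => hza s (hballa hs))
    have hcontb : ContinuousOn g' (Icc b (b + h)) := by
      refine ContinuousOn.congr ?_ heqb
      exact (sec_continuousOn Tb ib).comp exp_continuous.continuousOn
        (fun s hs => hzb s (hballb hs))
    have hcontm : ContinuousOn g' (Icc a b) := ContinuousOn.congr hg2 heqmid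
    have hseteq : Icc (t₀ - (n+1:ℕ) * h) (t₀ + (n+1:ℕ) * h) = Icc (a-h) a ∪ (Icc a b ∪ Icc b (b+h)) := by
      rw [Icc_union_Icc_eq_Icc hab (by linarith), Icc_union_Icc_eq_Icc (by linarith) (by linarith)]
      congr 1 <;> (push_cast; simp only [ha, hb]; ring)
    refine ⟨g', ?_, ?_, ?_⟩
    · rw [heqmid ⟨hat, htb⟩, hg1]
    · rw [hseteq]
      exact continuousOn_union_closed isClosed_Icc (isClosed_Icc.union isClosed_Icc) hconta
        (continuousOn_union_closed isClosed_Icc isClosed_Icc hcontm hcontb)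
    · intro s hs
      rw [hseteq] at hs
      rcases hs with hs | hs | hs
      · rw [heqa hs]
        exact sec_proj Ta ia (hza s (hballa hs))
      · rw [heqmid hs]
        exact hg3 s hs
      · rw [heqb hs]
        exact sec_proj Tb ib (hzb s (hballb hs))

lemma exists_lift (hp : IsCoveringMap p) (t₀ : ℝ) (e₁ : E) (he : p e₁ = Circle.exp t₀) :
    ∃ f : ℝ → E, Continuous f ∧ (∀ t, p (f t) = Circle.exp t) ∧ f t₀ = e₁ := by
  have : Nonempty E := ⟨e₁⟩
  have := fiber_nonempty hp
  obtain ⟨δ, hδpos, hδ⟩ := exists_delta hp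
  set h : ℝ := δ/2 with hh
  have hhpos : 0 < h := by positivity
  choose G hG1 hG2 hG3 using exists_lift_on hp hδpos hδ t₀ e₁ he
  simp only [← hh] at hG2 hG3
  have hmemIcc : ∀ {n : ℕ} {t : ℝ}, |t - t₀| ≤ n * h → t ∈ Icc (t₀ - n*h) (t₀ + n*h) := by
    intro n t ht
    rw [abs_le] at ht
    exact ⟨by linarith [ht.1], by linarith [ht.2]⟩
  have agree : ∀ (n m : ℕ), n ≤ m → ∀ t ∈ Icc (t₀ - n*h) (t₀ + n*h), G n t = G m t := by
    intro n m hnm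
    have hsub : Icc (t₀ - n*h) (t₀ + n*h) ⊆ Icc (t₀ - m*h) (t₀ + m*h) := by
      apply Icc_subset_Icc
      · have : (n:ℝ) * h ≤ m * h := by
          apply mul_le_mul_of_nonneg_right _ hhpos.le
          exact_mod_cast hnm
        linarith
      · have : (n:ℝ) * h ≤ m * h := by
          apply mul_le_mul_of_nonneg_right _ hhpos.le
          exact_mod_cast hnm
        linarith
    have ht₀ : t₀ ∈ Icc (t₀ - n*h) (t₀ + n*h) := by
      have h0 : (0:ℝ) ≤ n * h := by positivity
      exact ⟨by linarith, by linarith⟩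
    exact hp.eqOn_of_comp_eqOn isPreconnected_Icc (hG2 n) ((hG2 m).mono hsub)
      (fun s hs => by simp only [comp_apply, hG3 n s hs, hG3 m s (hsub hs)]) ht₀
      (by rw [hG1 n, hG1 m])
  set N : ℝ → ℕ := fun t => ⌈|t - t₀| / h⌉₊ + 1 with hN
  have hmem : ∀ t, |t - t₀| < N t * h := by
    intro t
    have h1 : |t - t₀| / h ≤ ⌈|t - t₀| / h⌉₊ := Nat.le_ceil _
    have h2 : |t - t₀| ≤ ⌈|t - t₀| / h⌉₊ * h := by
      rw [← div_le_iff₀ hhpos]; exact h1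
    have : (⌈|t - t₀| / h⌉₊ : ℝ) * h < N t * h := by
      apply mul_lt_mul_of_pos_right _ hhpos
      simp [hN]
    linarith
  set f : ℝ → E := fun t => G (N t) t with hf
  have hfG : ∀ (n : ℕ) (t : ℝ), |t - t₀| ≤ n * h → f t = G n t := by
    intro n t ht
    rw [hf]
    rcases le_total (N t) n with hle | hle
    · exact agree (N t) n hle t (hmemIcc (hmem t).le)
    · exact (agree n (N t) hle t (hmemIcc ht)).symm
  have hproj : ∀ t, p (f t) = Circle.exp t := by
    intro t
    exact hG3 (N t) t (hmemIcc (hmem t).le)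
  have ht₀e : f t₀ = e₁ := by
    rw [hfG 0 t₀ (by simp), hG1]
  have hcont : Continuous f := by
    rw [continuous_iff_continuousAt]
    intro t
    set n := N t with hn
    have hopen : IsOpen {s : ℝ | |s - t₀| < n * h} := by
      have : {s : ℝ | |s - t₀| < n * h} = (fun s => |s - t₀|) ⁻¹' (Iio (n*h)) := rfl
      rw [this]
      exact (continuous_abs.comp (by fun_prop)).isOpen_preimage _ isOpen_Iio
    have htmem : t ∈ {s : ℝ | |s - t₀| < n * h} := hmem t
    have heq : ∀ s ∈ {s : ℝ | |s - t₀| < n * h}, f s = G n s := fun s hs => hfG n s hs.le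
    have hGcont : ContinuousAt (G n) t := by
      apply (hG2 n).continuousAt
      apply Icc_mem_nhds
      · have := (abs_lt.1 (hmem t)).1; linarith
      · have := (abs_lt.1 (hmem t)).2; linarith
    apply hGcont.congr
    exact Filter.eventuallyEq_of_mem (hopen.mem_nhds htmem) (fun s hs => (heq s hs).symm)
  exact ⟨f, hcont, hproj, ht₀e⟩

end CircleCoverAux


open Set Topology Metric Function

namespace CircleCoverAux

variable {E : Type*} [TopologicalSpace E] {p : E → Circle}

lemma lift_isLocalHomeomorph (hp : IsCoveringMap p) {f : ℝ → E} (hcont : Continuous f)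
    (hproj : ∀ t, p (f t) = Circle.exp t) : IsLocalHomeomorph f := by
  apply IsLocalHomeomorph.of_comp (g := p) _ hp.isLocalHomeomorph hcont
  have : p ∘ f = Circle.exp := funext hproj
  rw [this]
  exact isLocalHomeomorph_circleExp

lemma lift_surjective (hp : IsCoveringMap p) [ConnectedSpace E] {f : ℝ → E}
    (hcont : Continuous f) (hproj : ∀ t, p (f t) = Circle.exp t) : Surjective f := by
  have hopen : IsOpen (range f) :=
    (lift_isLocalHomeomorph hp hcont hproj).isOpenMap.isOpen_range
  have hclosed : IsClosed (range f) := by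
    rw [← closure_subset_iff_isClosed]
    intro e he
    set z : Circle := p e with hz
    have hdisc : DiscreteTopology ↑(p ⁻¹' {z}) := (hp z).1
    have : Nonempty (p ⁻¹' {z}) := ⟨⟨e, rfl⟩⟩
    set T := (hp z).toTrivialization with hT
    have hzT : z ∈ T.baseSet := (hp z).mem_toTrivialization_baseSet
    set s₀ : ℝ := Complex.arg z with hs₀def
    have hs₀ : Circle.exp s₀ = z := Circle.exp_arg z
    -- radius
    have hpre : IsOpen (Circle.exp ⁻¹' T.baseSet) := T.open_baseSet.preimage exp_continuous
    obtain ⟨r, hr, hball⟩ := Metric.isOpen_iff.1 hpre s₀ (by simpa [hs₀] using hzT)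
    set i := (T e).2 with hi
    set V : Set E := (T.source ∩ ⇑T ⁻¹' (Prod.snd ⁻¹' {i})) ∩
      p ⁻¹' (Circle.exp '' ball s₀ r) with hV
    have hVopen : IsOpen V := by
      apply IsOpen.inter
      · exact T.continuousOn_toFun.isOpen_inter_preimage T.open_source
          (continuous_snd.isOpen_preimage _ (isOpen_discrete _))
      · exact (exp_isOpenMap _ isOpen_ball).preimage hp.continuous
    have heV : e ∈ V := by
      refine ⟨⟨T.mem_source.2 hzT, rfl⟩, ?_⟩
      rw [mem_preimage, ← hz, ← hs₀]
      exact mem_image_of_mem _ (mem_ball_self hr)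
    obtain ⟨x, hxV, t, rfl⟩ : (V ∩ range f).Nonempty :=
      mem_closure_iff.1 he V hVopen heV
    obtain ⟨s', hs'ball, hs'⟩ := hxV.2
    have hexp_eq : Circle.exp t = Circle.exp s' := by
      rw [hs', hproj t]
    obtain ⟨m, hm⟩ := Circle.exp_eq_exp.1 hexp_eq
    set s₁ : ℝ := s₀ + m * (2 * Real.pi) with hs₁def
    have hs₁exp : Circle.exp s₁ = z := by
      rw [hs₁def, exp_int_two_pi, hs₀]
    have htJ : t ∈ ball s₁ r := by
      simp only [mem_ball, Real.dist_eq] at hs'ball ⊢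
      rw [hm, hs₁def]
      simpa using hs'ball
    have hJbase : ∀ s ∈ ball s₁ r, Circle.exp s ∈ T.baseSet := by
      intro s hs
      have h1 : s - m * (2 * Real.pi) ∈ ball s₀ r := by
        simp only [mem_ball, Real.dist_eq, hs₁def] at hs ⊢
        have : s - ↑m * (2 * Real.pi) - s₀ = s - (s₀ + ↑m * (2 * Real.pi)) := by ring
        rw [this]; exact hs
      have h2 := hball h1
      rwa [mem_preimage, show s - ↑m * (2 * Real.pi) = s + (-m : ℤ) * (2 * Real.pi) by
        push_cast; ring, exp_int_two_pi] at h2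
    have heq := eqOn_sec hp T (convex_ball s₁ r).isPreconnected hcont.continuousOn
      (fun s _ => hproj s) hJbase htJ
    have hft : (T (f t)).2 = i := hxV.1.2
    refine ⟨s₁, ?_⟩
    have h3 := heq (mem_ball_self hr)
    rw [h3, hft]
    show sec T i (Circle.exp s₁) = e
    rw [hs₁exp]
    exact sec_apply_self T hzT
  have : range f = univ := by
    rcases isClopen_iff.1 ⟨hclosed, hopen⟩ with h | h
    · exact absurd h (Nonempty.ne_empty ⟨f 0, mem_range_self 0⟩)
    · exact h
  exact range_eq_univ.1 this

end CircleCoverAux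



open CircleCoverAux
/-- Classification of the connected coverings of the circle: a covering `p : E → Circle` with
`E` connected and locally path-connected is isomorphic over the circle either to the universal
covering `exp : ℝ → Circle`, `t ↦ exp (t * I)`, or to a degree-`n` self-covering
`z ↦ z ^ n` for some positive integer `n`. -/
theorem coverings_of_circle {E : Type*} [TopologicalSpace E]
    [ConnectedSpace E] [LocallyPathConnectedSpace E]
    {p : E → Circle} (hp : IsCoveringMap p) :
    (∃ h : ℝ ≃ₜ E, ∀ t : ℝ, p (h t) = Circle.exp t) ∨
      ∃ n : ℕ, 0 < n ∧ ∃ h : Circle ≃ₜ E, ∀ z : Circle, p (h z) = z ^ n := by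
  classical
  obtain ⟨e₁⟩ : Nonempty E := inferInstance
  set t₀ : ℝ := Complex.arg (p e₁) with ht₀def
  have he : p e₁ = Circle.exp t₀ := (Circle.exp_arg (p e₁)).symm
  obtain ⟨f, hcont, hproj, hft₀⟩ := exists_lift hp t₀ e₁ he
  have hlh : IsLocalHomeomorph f := lift_isLocalHomeomorph hp hcont hproj
  have hsurj : Surjective f := lift_surjective hp hcont hproj
  -- translations by deck elements
  have huniq : ∀ a : ℝ, Circle.exp a = 1 → ∀ s : ℝ, f (s + a) = f s →
      ∀ t, f (t + a) = f t := by
    intro a h1 s hs t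
    have hcomp : p ∘ (fun u => f (u + a)) = p ∘ f := by
      funext u
      simp only [comp_apply, hproj, Circle.exp_add, h1, mul_one]
    have := hp.eq_of_comp_eq (g₁ := fun u => f (u + a)) (g₂ := f)
      (hcont.comp (by fun_prop)) hcont hcomp s hs
    exact congrFun this t
  set D : Set ℝ := {a | Circle.exp a = 1 ∧ f (t₀ + a) = f t₀} with hDdef
  have hD_iff : ∀ a : ℝ, a ∈ D ↔ ∀ t, f (t + a) = f t := by
    intro a
    constructor
    · intro ha
      exact huniq a ha.1 t₀ ha.2
    · intro h
      have h2 : Circle.exp (t₀ + a) = Circle.exp t₀ := by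
        rw [← hproj (t₀ + a), ← hproj t₀, h t₀]
      have h3 : Circle.exp t₀ * Circle.exp a = Circle.exp t₀ * 1 := by
        rw [mul_one, ← Circle.exp_add]
        exact h2
      exact ⟨mul_left_cancel h3, h t₀⟩
  have hkey : ∀ t s : ℝ, f t = f s ↔ t - s ∈ D := by
    intro t s
    constructor
    · intro hts
      have hexp : Circle.exp t = Circle.exp s := by
        rw [← hproj t, ← hproj s, hts]
      have h1 : Circle.exp (t - s) = 1 := by
        rw [Circle.exp_sub, hexp, div_self']
      have h2 : f (s + (t - s)) = f s := by
        rw [show s + (t - s) = t by ring, hts]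
      refine (hD_iff _).2 (huniq _ h1 s h2)
    · intro hd
      have := (hD_iff _).1 hd s
      rwa [show s + (t - s) = t by ring] at this
  have hD0 : (0:ℝ) ∈ D := ⟨Circle.exp_zero, by rw [add_zero]⟩
  have hDadd : ∀ {a b : ℝ}, a ∈ D → b ∈ D → a + b ∈ D := by
    intro a b ha hb
    refine (hD_iff _).2 (fun t => ?_)
    rw [show t + (a + b) = (t + a) + b by ring, (hD_iff b).1 hb, (hD_iff a).1 ha]
  have hDneg : ∀ {a : ℝ}, a ∈ D → -a ∈ D := by
    intro a ha
    refine (hD_iff _).2 (fun t => ?_)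
    have := (hD_iff a).1 ha (t + -a)
    rw [show t + -a + a = t by ring] at this
    exact this.symm
  set H : AddSubgroup ℤ :=
    { carrier := {m : ℤ | ((m : ℝ) * (2 * Real.pi)) ∈ D}
      zero_mem' := by simpa using hD0
      add_mem' := by
        intro x y hx hy
        simp only [mem_setOf_eq] at *
        push_cast
        rw [add_mul]
        exact hDadd hx hy
      neg_mem' := by
        intro x hx
        simp only [mem_setOf_eq] at *
        push_cast
        rw [neg_mul]
        exact hDneg hx } with hHdef
  obtain ⟨n, hn⟩ := Int.subgroup_cyclic H
  have hmemH : ∀ m : ℤ, m ∈ H ↔ ∃ k : ℤ, m = k * n := by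
    intro m
    rw [hn, AddSubgroup.mem_closure_singleton]
    exact exists_congr fun k => by rw [smul_eq_mul, eq_comm]
  have hDchar : ∀ a : ℝ, a ∈ D ↔ ∃ k : ℤ, a = ((k * n : ℤ) : ℝ) * (2 * Real.pi) := by
    intro a
    constructor
    · intro ha
      obtain ⟨m, hm⟩ := Circle.exp_eq_one.1 ha.1
      have hmH : m ∈ H := by
        show ((m : ℝ) * (2 * Real.pi)) ∈ D
        rw [← hm]; exact ha
      obtain ⟨k, hk⟩ := (hmemH m).1 hmH
      exact ⟨k, by rw [hm, hk]⟩
    · rintro ⟨k, rfl⟩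
      exact (hmemH (k * n)).2 ⟨k, rfl⟩
  by_cases hn0 : n = 0
  · -- universal covering case
    left
    have hinj : Injective f := by
      intro t s hts
      obtain ⟨k, hk⟩ := (hDchar _).1 ((hkey t s).1 hts)
      rw [hn0] at hk
      simp at hk
      linarith
    refine ⟨hlh.toHomeomorphOfBijective ⟨hinj, hsurj⟩, fun t => hproj t⟩
  · -- finite covering case
    right
    set n' : ℕ := n.natAbs with hn'def
    have hn' : 0 < n' := Int.natAbs_pos.2 hn0
    have hne : ((n' : ℝ)) ≠ 0 := by positivity
    have habs : ∀ a : ℝ, a ∈ D ↔ ∃ k : ℤ, a = (k : ℝ) * ((n' : ℝ) * (2 * Real.pi)) := by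
      intro a
      rcases Int.natAbs_eq n with hcase | hcase
      · constructor
        · intro ha
          obtain ⟨k, hk⟩ := (hDchar a).1 ha
          refine ⟨k, ?_⟩
          rw [hk, hcase]
          simp only [hn'def]
          push_cast [Nat.cast_natAbs]
          ring
        · rintro ⟨k, rfl⟩
          refine (hDchar _).2 ⟨k, ?_⟩
          rw [hcase]
          simp only [hn'def]
          push_cast [Nat.cast_natAbs]
          ring
      · constructor
        · intro ha
          obtain ⟨k, hk⟩ := (hDchar a).1 ha
          refine ⟨-k, ?_⟩
          rw [hk, hcase]
          simp only [hn'def]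
          push_cast [Nat.cast_natAbs]
          ring
        · rintro ⟨k, rfl⟩
          refine (hDchar _).2 ⟨-k, ?_⟩
          rw [hcase]
          simp only [hn'def]
          push_cast [Nat.cast_natAbs]
          ring
    set F : Circle → E := fun z => f ((n' : ℝ) * Complex.arg ↑z) with hFdef
    have hFexp : ∀ t : ℝ, F (Circle.exp t) = f ((n' : ℝ) * t) := by
      intro t
      obtain ⟨m, hm⟩ := Circle.exp_eq_exp.1 (Circle.exp_arg (Circle.exp t))
      refine (hkey _ _).2 ((habs _).2 ⟨m, ?_⟩)
      rw [hm]
      push_cast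
      ring
    have hpF : ∀ z : Circle, p (F z) = z ^ n' := by
      intro z
      rw [hFdef]
      show p (f _) = z ^ n'
      rw [hproj, exp_nat_mul, Circle.exp_arg]
    have hFinj : Injective F := by
      intro z w hzw
      obtain ⟨k, hk⟩ := (habs _).1 ((hkey _ _).1 hzw)
      have h1 : (n' : ℝ) * (Complex.arg ↑z - Complex.arg ↑w) =
          (n' : ℝ) * ((k : ℝ) * (2 * Real.pi)) := by
        rw [show (n' : ℝ) * (Complex.arg ↑z - Complex.arg ↑w)
            = (n' : ℝ) * Complex.arg ↑z - (n' : ℝ) * Complex.arg ↑w by ring, hk]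
        ring
      have h2 := mul_left_cancel₀ hne h1
      have h3 : Circle.exp (Complex.arg ↑z) = Circle.exp (Complex.arg ↑w) :=
        Circle.exp_eq_exp.2 ⟨k, by linarith⟩
      rwa [Circle.exp_arg, Circle.exp_arg] at h3
    have hFsurj : Surjective F := by
      intro e
      obtain ⟨t, rfl⟩ := hsurj e
      refine ⟨Circle.exp (t / n'), ?_⟩
      rw [hFexp]
      congr 1
      field_simp
    have hFcont : Continuous F := by
      rw [exp_isQuotientMap.continuous_iff]
      have : F ∘ Circle.exp = fun t => f ((n' : ℝ) * t) := funext hFexp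
      rw [this]
      fun_prop
    have hFopen : IsOpenMap F := by
      intro O hO
      have himg : F '' O = f '' ((fun t => (n' : ℝ) * t) '' (Circle.exp ⁻¹' O)) := by
        ext e
        constructor
        · rintro ⟨z, hzO, rfl⟩
          exact ⟨(n' : ℝ) * Complex.arg ↑z,
            ⟨Complex.arg ↑z, by rw [mem_preimage, Circle.exp_arg]; exact hzO, rfl⟩, rfl⟩
        · rintro ⟨x, ⟨t, htO, rfl⟩, rfl⟩
          exact ⟨Circle.exp t, htO, hFexp t⟩
      rw [himg]
      apply hlh.isOpenMap
      exact (Homeomorph.mulLeft₀ (n' : ℝ) hne).isOpenMap _ (hO.preimage exp_continuous)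
    exact ⟨n', hn', Equiv.toHomeomorphOfContinuousOpen
      (Equiv.ofBijective F ⟨hFinj, hFsurj⟩) hFcont hFopen, fun z => hpF z⟩
end
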